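/- arXiv:0911.3993 — 6 statements merged into one kernel-verified Lean document; each statement's English description precedes it below -/
import Mathlib

section
/- Let ρ : g → gl(V) be a representation and let Φ : V_m → K be a smooth function which does not depend on the last component, i.e. Φ(f_0, …, f_m) = θ(f_0, …, f_{m-1}) for a smooth function θ on V_{m-1}. Then Φ is g_m-invariant on V_m if and only if θ is g_{m-1}-invariant on V_{m-1}. -/
open Finset

attribute [local instance 100] LieRing.ofAssociativeRing

/-- The Takiff representation `ρ_m` of `g_m` on `V_m`:
`(ρ_m(X)F)_k = ∑_{r+s=k} ρ(x_r)(f_s)`. -/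
def takiffRep {g V : Type*} [LieRing g] [LieAlgebra ℝ g]
    [AddCommGroup V] [Module ℝ V] (ρ : g →ₗ⁅ℝ⁆ Module.End ℝ V) {m : ℕ}
    (X : Fin (m + 1) → g) (F : Fin (m + 1) → V) : Fin (m + 1) → V :=
  fun k => ∑ r : Fin (m + 1), if (r : ℕ) ≤ (k : ℕ) then ρ (X r) (F (k - r)) else 0

lemma takiffRep_castSucc {g V : Type*} [LieRing g] [LieAlgebra ℝ g]
    [AddCommGroup V] [Module ℝ V] (ρ : g →ₗ⁅ℝ⁆ Module.End ℝ V) {n : ℕ}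
    (X : Fin (n + 2) → g) (F : Fin (n + 2) → V) (i : Fin (n + 1)) :
    takiffRep ρ X F i.castSucc
      = takiffRep ρ (fun j => X j.castSucc) (fun j => F j.castSucc) i := by
  unfold takiffRep
  rw [Fin.sum_univ_castSucc]
  have hlast : ¬ ((Fin.last (n + 1) : ℕ) ≤ (i.castSucc : ℕ)) := by
    simp only [Fin.val_last, Fin.coe_castSucc]
    omega
  rw [if_neg hlast, add_zero]
  refine Finset.sum_congr rfl fun r _ => ?_
  by_cases hr : (r : ℕ) ≤ (i : ℕ)
  · simp only [Fin.coe_castSucc, if_pos hr]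
    congr 1
    have h1 : ((i.castSucc - r.castSucc : Fin (n + 2)) : ℕ) = (i : ℕ) - (r : ℕ) := by
      rw [Fin.coe_sub_iff_le.2 (by exact_mod_cast hr)]
      simp
    have h2 : (((i - r : Fin (n + 1)).castSucc : Fin (n + 2)) : ℕ) = (i : ℕ) - (r : ℕ) := by
      rw [Fin.coe_castSucc, Fin.coe_sub_iff_le.2 (by exact_mod_cast hr)]
    congr 1
    exact Fin.ext (h1.trans h2.symm)
  · simp [hr]

/-- If a smooth function `Φ` on `V_m` does not depend on the last component,
i.e. `Φ(f_0, …, f_m) = θ(f_0, …, f_{m-1})`, then `Φ` is `g_m`-invariant if and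
only if `θ` is `g_{m-1}`-invariant (here `m = n + 1`). -/
theorem takiff_invariance_of_truncation {g V : Type*} [LieRing g] [LieAlgebra ℝ g]
    [NormedAddCommGroup V] [NormedSpace ℝ V] [FiniteDimensional ℝ V]
    (ρ : g →ₗ⁅ℝ⁆ Module.End ℝ V) (n : ℕ)
    (Φ : (Fin (n + 2) → V) → ℝ) (θ : (Fin (n + 1) → V) → ℝ)
    (hΦ : ContDiff ℝ (⊤ : ℕ∞) Φ) (hθ : ContDiff ℝ (⊤ : ℕ∞) θ)
    (h : ∀ F : Fin (n + 2) → V, Φ F = θ (fun i => F i.castSucc)) :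
    (∀ (X : Fin (n + 2) → g) (F : Fin (n + 2) → V),
        deriv (fun t : ℝ => Φ (F + t • takiffRep ρ X F)) 0 = 0) ↔
    (∀ (X : Fin (n + 1) → g) (F : Fin (n + 1) → V),
        deriv (fun t : ℝ => θ (F + t • takiffRep ρ X F)) 0 = 0) := by
  constructor
  · intro H X F
    have key : (fun t : ℝ => θ (F + t • takiffRep ρ X F))
        = fun t : ℝ => Φ (Fin.snoc F 0 + t • takiffRep ρ (Fin.snoc X 0) (Fin.snoc F 0)) := by
      funext t
      rw [h]
      congr 1
      funext i
      simp only [Pi.add_apply, Pi.smul_apply]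
      rw [takiffRep_castSucc]
      simp [Fin.snoc_castSucc]
    rw [key]
    exact H _ _
  · intro H X F
    have key : (fun t : ℝ => Φ (F + t • takiffRep ρ X F))
        = fun t : ℝ => θ ((fun i => F i.castSucc)
            + t • takiffRep ρ (fun j => X j.castSucc) (fun j => F j.castSucc)) := by
      funext t
      rw [h]
      congr 1
      funext i
      simp only [Pi.add_apply, Pi.smul_apply]
      rw [takiffRep_castSucc]
    rw [key]
    exact H _ _
end

section
/- Let ρ : g → gl(V) be a representation and φ : V → K a smooth g-invariant function (meaning (d/dt)|_{t=0} φ(v + t ρ(x)v) = 0 for all x ∈ g, v ∈ V). Then for every 0 ≤ k ≤ m, the function Φ_k(f_0,…,f_m) = (1/k!)(d/dt)^k|_{t=0} φ(∑_j t^j f_j) is g_m-invariant on V_m, i.e. (d/ds)|_{s=0} Φ_k(F + s ρ_m(X)F) = 0 for all X ∈ g_m, F ∈ V_m. -/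
open Finset

attribute [local instance 100] LieRing.ofAssociativeRing

section Aux

private lemma topcast : ((⊤ : ℕ∞) : WithTop ℕ∞) + 1 ≤ ((⊤ : ℕ∞) : WithTop ℕ∞) := by
  exact_mod_cast le_top

/-- Partial derivative of a function on `ℝ²` in direction `v`. -/
noncomputable def pdAux (v : ℝ × ℝ) (g : ℝ × ℝ → ℝ) : ℝ × ℝ → ℝ :=
  fun p => fderiv ℝ g p v

private lemma pd_contDiff {g : ℝ × ℝ → ℝ} (hg : ContDiff ℝ (⊤ : ℕ∞) g) (v : ℝ × ℝ) :
    ContDiff ℝ (⊤ : ℕ∞) (pdAux v g) :=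
  (hg.fderiv_right topcast).clm_apply contDiff_const

private lemma pd_comm {g : ℝ × ℝ → ℝ} (hg : ContDiff ℝ (⊤ : ℕ∞) g) (v w : ℝ × ℝ) :
    pdAux v (pdAux w g) = pdAux w (pdAux v g) := by
  funext p
  have hg1 : ContDiff ℝ (⊤ : ℕ∞) (fderiv ℝ g) := hg.fderiv_right topcast
  have hd : ∀ y, HasFDerivAt g (fderiv ℝ g y) y := fun y =>
    (hg.differentiable (by simp)).differentiableAt.hasFDerivAt
  have hd2 : HasFDerivAt (fderiv ℝ g) (fderiv ℝ (fderiv ℝ g) p) p :=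
    (hg1.differentiable (by simp)).differentiableAt.hasFDerivAt
  have key : ∀ a u : ℝ × ℝ, pdAux a (pdAux u g) p = fderiv ℝ (fderiv ℝ g) p a u := by
    intro a u
    have h1 : pdAux u g = (ContinuousLinearMap.apply ℝ ℝ u) ∘ (fderiv ℝ g) := rfl
    rw [pdAux, h1, fderiv_comp p (ContinuousLinearMap.apply ℝ ℝ u).differentiableAt
      ((hg1.differentiable (by simp)).differentiableAt)]
    simp [ContinuousLinearMap.fderiv]
  rw [key v w, key w v, second_derivative_symmetric hd hd2 v w]

private lemma hasDerivAt_slice_t (g : ℝ × ℝ → ℝ) (hg : ContDiff ℝ (⊤ : ℕ∞) g) (s t₀ : ℝ) :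
    HasDerivAt (fun t => g (s, t)) (pdAux (0, 1) g (s, t₀)) t₀ := by
  have h1 : HasDerivAt (fun t : ℝ => (s, t)) ((0 : ℝ), (1 : ℝ)) t₀ :=
    (hasDerivAt_const t₀ s).prodMk (hasDerivAt_id t₀)
  exact ((hg.differentiable (by simp)).differentiableAt.hasFDerivAt).comp_hasDerivAt t₀ h1

private lemma hasDerivAt_slice_s (g : ℝ × ℝ → ℝ) (hg : ContDiff ℝ (⊤ : ℕ∞) g) (s₀ t : ℝ) :
    HasDerivAt (fun s => g (s, t)) (pdAux (1, 0) g (s₀, t)) s₀ := by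
  have h1 : HasDerivAt (fun s : ℝ => (s, t)) ((1 : ℝ), (0 : ℝ)) s₀ :=
    (hasDerivAt_id s₀).prodMk (hasDerivAt_const s₀ t)
  exact ((hg.differentiable (by simp)).differentiableAt.hasFDerivAt).comp_hasDerivAt s₀ h1

private lemma iter_slice (k : ℕ) : ∀ (g : ℝ × ℝ → ℝ), ContDiff ℝ (⊤ : ℕ∞) g → ∀ s t₀,
    iteratedDeriv k (fun t => g (s, t)) t₀ = (pdAux (0, 1))^[k] g (s, t₀) := by
  induction k with
  | zero => intro g hg s t₀; simp [iteratedDeriv_zero]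
  | succ k ih =>
    intro g hg s t₀
    rw [iteratedDeriv_succ', Function.iterate_succ_apply]
    have : deriv (fun t => g (s, t)) = fun t => pdAux (0, 1) g (s, t) := by
      funext t; exact (hasDerivAt_slice_t g hg s t).deriv
    rw [this]
    exact ih (pdAux (0, 1) g) (pd_contDiff hg _) s t₀

private lemma pd_iterate_comm {g : ℝ × ℝ → ℝ} (hg : ContDiff ℝ (⊤ : ℕ∞) g) (k : ℕ) :
    pdAux (1, 0) ((pdAux (0, 1))^[k] g) = (pdAux (0, 1))^[k] (pdAux (1, 0) g) := by
  induction k generalizing g with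
  | zero => simp
  | succ k ih =>
    rw [Function.iterate_succ_apply, Function.iterate_succ_apply,
      ih (pd_contDiff hg _), pd_comm hg]

private lemma pd_iterate_contDiff {g : ℝ × ℝ → ℝ} (hg : ContDiff ℝ (⊤ : ℕ∞) g) (k : ℕ) :
    ContDiff ℝ (⊤ : ℕ∞) ((pdAux (0, 1))^[k] g) := by
  induction k generalizing g with
  | zero => simpa
  | succ k ih => rw [Function.iterate_succ_apply]; exact ih (pd_contDiff hg _)

private lemma vanish (k : ℕ) : ∀ (n : ℕ) (h : ℝ → ℝ), ContDiff ℝ (⊤ : ℕ∞) h → k < n →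
    iteratedDeriv k (fun t => t ^ n * h t) 0 = 0 := by
  induction k with
  | zero =>
    intro n h _ hn
    simp only [iteratedDeriv_zero]; rw [zero_pow (by omega), zero_mul]
  | succ k ih =>
    intro n h hh hn
    obtain ⟨n, rfl⟩ : ∃ n', n = n' + 1 := ⟨n - 1, by omega⟩
    rw [iteratedDeriv_succ']
    have hd : deriv (fun t => t ^ (n + 1) * h t)
        = fun t => t ^ n * ((n + 1 : ℝ) * h t + t * deriv h t) := by
      funext t
      have h1 : HasDerivAt (fun t : ℝ => t ^ (n + 1)) ((n + 1 : ℝ) * t ^ n) t := by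
        simpa using hasDerivAt_pow (n + 1) t
      have h2 : HasDerivAt h (deriv h t) t :=
        (hh.differentiable (by simp)).differentiableAt.hasDerivAt
      rw [(h1.fun_mul h2).deriv]; ring
    rw [hd]
    exact ih n _ ((contDiff_const.mul hh).add (contDiff_id.mul
      (contDiff_infty_iff_deriv.mp hh).2)) (by omega)

private lemma fin_sub_val {m : ℕ} (k r : Fin (m + 1)) :
    ((k - r : Fin (m + 1)) : ℕ) = if (r : ℕ) ≤ (k : ℕ) then (k : ℕ) - (r : ℕ)
      else (k : ℕ) + (m + 1) - (r : ℕ) := by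
  have h : ((k - r : Fin (m + 1)) : ℕ) = ((m + 1 - (r : ℕ)) + (k : ℕ)) % (m + 1) := by
    rw [Fin.sub_def]
  rw [h]
  have hk := k.isLt
  have hr := r.isLt
  split
  · next hle =>
    have h2 : (m + 1 - (r : ℕ)) + (k : ℕ) = ((k : ℕ) - (r : ℕ)) + (m + 1) := by omega
    rw [h2, Nat.add_mod_right, Nat.mod_eq_of_lt (by omega)]
  · next hle => rw [Nat.mod_eq_of_lt (by omega)]; omega

private lemma takiff_sum {g V : Type*} [LieRing g] [LieAlgebra ℝ g]
    [AddCommGroup V] [Module ℝ V] (ρ : g →ₗ⁅ℝ⁆ Module.End ℝ V) {m : ℕ}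
    (X : Fin (m + 1) → g) (F : Fin (m + 1) → V) (t : ℝ) :
    ∑ k : Fin (m + 1), t ^ (k : ℕ) • takiffRep ρ X F k
      = ρ (∑ r : Fin (m + 1), t ^ (r : ℕ) • X r) (∑ s : Fin (m + 1), t ^ (s : ℕ) • F s)
        - ∑ r : Fin (m + 1), ∑ s : Fin (m + 1),
            if m < (r : ℕ) + (s : ℕ) then t ^ ((r : ℕ) + (s : ℕ)) • ρ (X r) (F s) else 0 := by
  have hρ : ρ (∑ r : Fin (m + 1), t ^ (r : ℕ) • X r) (∑ s : Fin (m + 1), t ^ (s : ℕ) • F s)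
      = ∑ r : Fin (m + 1), ∑ s : Fin (m + 1), t ^ ((r : ℕ) + (s : ℕ)) • ρ (X r) (F s) := by
    have h1 : ρ (∑ r : Fin (m + 1), t ^ (r : ℕ) • X r)
        = ∑ r : Fin (m + 1), t ^ (r : ℕ) • ρ (X r) := by
      rw [← LieHom.coe_toLinearMap, map_sum]
      simp [map_smul]
    rw [h1]
    simp only [map_sum, map_smul, LinearMap.coe_sum, Finset.sum_apply,
      LinearMap.smul_apply, Finset.smul_sum, smul_smul]
    rw [Finset.sum_comm]
    refine Finset.sum_congr rfl fun r _ => Finset.sum_congr rfl fun s _ => ?_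
    rw [← pow_add, Nat.add_comm]
  rw [hρ, ← Finset.sum_sub_distrib]
  have hsplit : ∀ r : Fin (m + 1),
      (∑ s : Fin (m + 1), t ^ ((r : ℕ) + (s : ℕ)) • ρ (X r) (F s))
        - (∑ s : Fin (m + 1), if m < (r : ℕ) + (s : ℕ)
            then t ^ ((r : ℕ) + (s : ℕ)) • ρ (X r) (F s) else 0)
      = ∑ s : Fin (m + 1), if (r : ℕ) + (s : ℕ) ≤ m
          then t ^ ((r : ℕ) + (s : ℕ)) • ρ (X r) (F s) else 0 := by
    intro r
    rw [← Finset.sum_sub_distrib]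
    refine Finset.sum_congr rfl fun s _ => ?_
    by_cases h : m < (r : ℕ) + (s : ℕ)
    · rw [if_pos h, if_neg (by omega), sub_self]
    · rw [if_neg h, if_pos (by omega), sub_zero]
  simp_rw [hsplit]
  have hL : ∑ k : Fin (m + 1), t ^ (k : ℕ) • takiffRep ρ X F k
      = ∑ r : Fin (m + 1), ∑ k : Fin (m + 1),
          if (r : ℕ) ≤ (k : ℕ) then t ^ (k : ℕ) • ρ (X r) (F (k - r)) else 0 := by
    rw [Finset.sum_comm]
    refine Finset.sum_congr rfl fun k _ => ?_
    rw [takiffRep, Finset.smul_sum]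
    refine Finset.sum_congr rfl fun r _ => ?_
    by_cases h : (r : ℕ) ≤ (k : ℕ) <;> simp [h]
  rw [hL]
  refine Finset.sum_congr rfl fun r _ => ?_
  refine Fintype.sum_equiv (Equiv.subRight r) _ _ fun k => ?_
  have hv := fin_sub_val k r
  have hk := k.isLt
  have hr := r.isLt
  by_cases h : (r : ℕ) ≤ (k : ℕ)
  · rw [if_pos h, Equiv.subRight_apply, hv, if_pos h,
      if_pos (show (r : ℕ) + ((k : ℕ) - (r : ℕ)) ≤ m by omega)]
    congr 2
    omega
  · rw [if_neg h, Equiv.subRight_apply, hv, if_neg h,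
      if_neg (show ¬((r : ℕ) + ((k : ℕ) + (m + 1) - (r : ℕ)) ≤ m) by omega)]

private lemma fderiv_dir {V : Type*} [NormedAddCommGroup V] [NormedSpace ℝ V]
    {φ : V → ℝ} (hφ : ContDiff ℝ (⊤ : ℕ∞) φ) (v w : V) :
    HasDerivAt (fun s : ℝ => φ (v + s • w)) (fderiv ℝ φ v w) 0 := by
  have h1 : HasDerivAt (fun s : ℝ => v + s • w) w 0 := by
    simpa using ((hasDerivAt_id (0 : ℝ)).smul_const w).const_add v
  have h2 := ((hφ.differentiable (by simp)).differentiableAt.hasFDerivAt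
    (x := v + (0 : ℝ) • w)).comp_hasDerivAt 0 h1
  simpa [Function.comp_def] using h2

end Aux

/-- If `φ` is a smooth `g`-invariant function on `V`, then for every `0 ≤ k ≤ m`
the Taylor coefficient `Φ_k(f_0,…,f_m) = (1/k!)(d/dt)^k|₀ φ(∑_j t^j f_j)` is a
`g_m`-invariant function on `V_m`. -/
theorem taylor_coeff_takiff_invariant {g V : Type*} [LieRing g] [LieAlgebra ℝ g]
    [NormedAddCommGroup V] [NormedSpace ℝ V] [FiniteDimensional ℝ V]
    (ρ : g →ₗ⁅ℝ⁆ Module.End ℝ V)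
    (φ : V → ℝ) (hφ : ContDiff ℝ (⊤ : ℕ∞) φ)
    (hinv : ∀ (x : g) (v : V), deriv (fun t : ℝ => φ (v + t • ρ x v)) 0 = 0)
    (m k : ℕ) (hk : k ≤ m) :
    ∀ (X : Fin (m + 1) → g) (F : Fin (m + 1) → V),
      deriv (fun s : ℝ =>
        (k.factorial : ℝ)⁻¹ *
          iteratedDeriv k
            (fun t : ℝ => φ (∑ j : Fin (m + 1), t ^ (j : ℕ) • (F + s • takiffRep ρ X F) j))
            0) 0 = 0 := by
  intro X F
  set G := takiffRep ρ X F with hG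
  set Vf : ℝ → V := fun t => ∑ j : Fin (m + 1), t ^ (j : ℕ) • F j with hVf
  set Wf : ℝ → V := fun t => ∑ j : Fin (m + 1), t ^ (j : ℕ) • G j with hWf
  set Pf : ℝ → g := fun t => ∑ r : Fin (m + 1), t ^ (r : ℕ) • X r with hPf
  -- smoothness
  have hVs : ContDiff ℝ (⊤ : ℕ∞) Vf :=
    ContDiff.sum fun j _ => (contDiff_id.pow _).smul contDiff_const
  have hWs : ContDiff ℝ (⊤ : ℕ∞) Wf :=
    ContDiff.sum fun j _ => (contDiff_id.pow _).smul contDiff_const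
  set Ψ : ℝ × ℝ → ℝ := fun p => φ (Vf p.2 + p.1 • Wf p.2) with hΨdef
  have hΨ : ContDiff ℝ (⊤ : ℕ∞) Ψ :=
    hφ.comp ((hVs.comp contDiff_snd).add (contDiff_fst.smul (hWs.comp contDiff_snd)))
  -- rewrite the inner function as a slice of Ψ
  have hfun : ∀ s : ℝ, (fun t : ℝ => φ (∑ j : Fin (m + 1), t ^ (j : ℕ) • (F + s • G) j))
      = fun t => Ψ (s, t) := by
    intro s
    funext t
    have : ∑ j : Fin (m + 1), t ^ (j : ℕ) • (F + s • G) j = Vf t + s • Wf t := by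
      show _ = (∑ j : Fin (m + 1), t ^ (j : ℕ) • F j) + s • ∑ j : Fin (m + 1), t ^ (j : ℕ) • G j
      rw [Finset.smul_sum, ← Finset.sum_add_distrib]
      refine Finset.sum_congr rfl fun j _ => ?_
      simp only [Pi.add_apply, Pi.smul_apply, smul_add]
      rw [smul_comm]
    rw [this]
  simp_rw [hfun]
  -- replace iterated t-derivative by iterated partial derivative
  have hrw : (fun s : ℝ => (k.factorial : ℝ)⁻¹ * iteratedDeriv k (fun t => Ψ (s, t)) 0)
      = fun s => (k.factorial : ℝ)⁻¹ * ((pdAux (0, 1))^[k] Ψ) (s, 0) := by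
    funext s; rw [iter_slice k Ψ hΨ s 0]
  rw [hrw]
  have hDk : ContDiff ℝ (⊤ : ℕ∞) ((pdAux (0, 1))^[k] Ψ) := pd_iterate_contDiff hΨ k
  have hder : HasDerivAt (fun s : ℝ => (k.factorial : ℝ)⁻¹ * ((pdAux (0, 1))^[k] Ψ) (s, 0))
      ((k.factorial : ℝ)⁻¹ * pdAux (1, 0) ((pdAux (0, 1))^[k] Ψ) (0, 0)) 0 :=
    (hasDerivAt_slice_s _ hDk 0 0).const_mul _
  rw [hder.deriv]
  -- swap the partial derivatives
  rw [pd_iterate_comm hΨ k]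
  -- identify the s-derivative slice
  have hpdΨ : (fun t => pdAux (1, 0) Ψ (0, t))
      = fun t => -(t ^ (m + 1) *
          (∑ r : Fin (m + 1), ∑ s : Fin (m + 1), if m < (r : ℕ) + (s : ℕ)
            then t ^ ((r : ℕ) + (s : ℕ) - (m + 1)) * fderiv ℝ φ (Vf t) (ρ (X r) (F s))
            else 0)) := by
    funext t
    have h1 : pdAux (1, 0) Ψ (0, t) = fderiv ℝ φ (Vf t) (Wf t) := by
      rw [← (hasDerivAt_slice_s Ψ hΨ 0 t).deriv]
      have : (fun s => Ψ (s, t)) = fun s : ℝ => φ (Vf t + s • Wf t) := rfl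
      rw [this, (fderiv_dir hφ (Vf t) (Wf t)).deriv]
    rw [h1]
    have h2 : Wf t = ρ (Pf t) (Vf t)
        - ∑ r : Fin (m + 1), ∑ s : Fin (m + 1),
            if m < (r : ℕ) + (s : ℕ) then t ^ ((r : ℕ) + (s : ℕ)) • ρ (X r) (F s) else 0 :=
      takiff_sum ρ X F t
    rw [h2, map_sub]
    have h3 : fderiv ℝ φ (Vf t) (ρ (Pf t) (Vf t)) = 0 := by
      rw [← (fderiv_dir hφ (Vf t) (ρ (Pf t) (Vf t))).deriv]
      exact hinv (Pf t) (Vf t)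
    rw [h3, zero_sub, neg_inj]
    rw [map_sum, Finset.mul_sum]
    refine Finset.sum_congr rfl fun r _ => ?_
    rw [map_sum, Finset.mul_sum]
    refine Finset.sum_congr rfl fun s _ => ?_
    by_cases h : m < (r : ℕ) + (s : ℕ)
    · rw [if_pos h, if_pos h, map_smul, smul_eq_mul, ← mul_assoc, ← pow_add]
      congr 2
      omega
    · rw [if_neg h, if_neg h, map_zero, mul_zero]
  -- conclude via iterated derivative of t^{m+1} * smooth
  rw [← iter_slice k _ (pd_contDiff hΨ _) 0 0, hpdΨ]
  have hH : ContDiff ℝ (⊤ : ℕ∞) (fun t : ℝ =>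
      ∑ r : Fin (m + 1), ∑ s : Fin (m + 1), if m < (r : ℕ) + (s : ℕ)
        then t ^ ((r : ℕ) + (s : ℕ) - (m + 1)) * fderiv ℝ φ (Vf t) (ρ (X r) (F s))
        else 0) := by
    refine ContDiff.sum fun r _ => ContDiff.sum fun s _ => ?_
    by_cases h : m < (r : ℕ) + (s : ℕ)
    · simp only [if_pos h]
      exact (contDiff_id.pow _).mul
        (((hφ.fderiv_right topcast).comp hVs).clm_apply contDiff_const)
    · simp only [if_neg h]; exact contDiff_const
  have : iteratedDeriv k (fun t : ℝ => -(t ^ (m + 1) *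
      (∑ r : Fin (m + 1), ∑ s : Fin (m + 1), if m < (r : ℕ) + (s : ℕ)
        then t ^ ((r : ℕ) + (s : ℕ) - (m + 1)) * fderiv ℝ φ (Vf t) (ρ (X r) (F s))
        else 0))) 0 = 0 := by
    have hneg : (fun t : ℝ => -(t ^ (m + 1) *
        (∑ r : Fin (m + 1), ∑ s : Fin (m + 1), if m < (r : ℕ) + (s : ℕ)
          then t ^ ((r : ℕ) + (s : ℕ) - (m + 1)) * fderiv ℝ φ (Vf t) (ρ (X r) (F s))
          else 0))) = fun t : ℝ => t ^ (m + 1) *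
        (-(∑ r : Fin (m + 1), ∑ s : Fin (m + 1), if m < (r : ℕ) + (s : ℕ)
          then t ^ ((r : ℕ) + (s : ℕ) - (m + 1)) * fderiv ℝ φ (Vf t) (ρ (X r) (F s))
          else 0)) := by
      funext t; ring
    rw [hneg]
    exact vanish k (m + 1) _ hH.neg (by omega)
  rw [this, mul_zero]
end

section
/- The map θ(f_0, …, f_m) = (f_m, …, f_0) on (g*)^{m+1} is an involution (θ ∘ θ = id), and consequently the Takiff extension (ad*)_m of the coadjoint representation of g is equivalent (as a representation of g_m) to the coadjoint representation (ad_m)* of the Takiff algebra g_m. -/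
open Finset

variable {K : Type*} [Field K] {g : Type*} [LieRing g] [LieAlgebra K g]

/-- The coadjoint action `ad*(x) f = -(f ∘ ad x)` of `g` on `g*`. -/
def coad (K : Type*) [Field K] (g : Type*) [LieRing g] [LieAlgebra K g] (x : g) :
    Module.Dual K g →ₗ[K] Module.Dual K g :=
  -(LieAlgebra.ad K g x).dualMap

/-- The Takiff extension `(ad*)_m` of the coadjoint representation, acting on `(g*)^{m+1}`. -/
def coadTakiff {m : ℕ} (X : Fin (m + 1) → g) (F : Fin (m + 1) → Module.Dual K g) :
    Fin (m + 1) → Module.Dual K g :=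
  fun k => ∑ r : Fin (m + 1), if (r : ℕ) ≤ (k : ℕ) then coad K g (X r) (F (k - r)) else 0

/-- The coadjoint representation `(ad_m)*` of the Takiff algebra `g_m` on its dual,
identified with `(g*)^{m+1}`. -/
def takiffCoadjoint {m : ℕ} (X : Fin (m + 1) → g) (G : Fin (m + 1) → Module.Dual K g) :
    Fin (m + 1) → Module.Dual K g :=
  fun k => ∑ i : Fin (m + 1), if (k : ℕ) + (i : ℕ) ≤ m then coad K g (X i) (G (k + i)) else 0

/-- The order-reversal map `θ(f_0,…,f_m) = (f_m,…,f_0)` on `(g*)^{m+1}`. -/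
def revMap {m : ℕ} (F : Fin (m + 1) → Module.Dual K g) : Fin (m + 1) → Module.Dual K g :=
  fun k => F k.rev

lemma rev_sub_key {m : ℕ} (k r : Fin (m + 1)) (h : (k : ℕ) + (r : ℕ) ≤ m) :
    Fin.rev (k.rev - r) = k + r := by
  have hk : (k : ℕ) ≤ m := Nat.lt_succ_iff.mp k.isLt
  have hr : (r : ℕ) ≤ m := Nat.lt_succ_iff.mp r.isLt
  apply Fin.ext
  simp only [Fin.val_rev, Fin.sub_def, Fin.add_def]
  have h2 : (m + 1 - (r : ℕ) + (m + 1 - ((k : ℕ) + 1))) % (m + 1)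
      = m - (k : ℕ) - (r : ℕ) := by
    have h1 : m + 1 - (r : ℕ) + (m + 1 - ((k : ℕ) + 1))
        = (m - (k : ℕ) - (r : ℕ)) + (m + 1) := by omega
    rw [h1, Nat.add_mod_right, Nat.mod_eq_of_lt (by omega)]
  have h3 : ((k : ℕ) + (r : ℕ)) % (m + 1) = (k : ℕ) + (r : ℕ) :=
    Nat.mod_eq_of_lt (by omega)
  rw [h2, h3]
  omega

/-- The order-reversal map `θ` is an involution, and consequently the Takiff extension
`(ad*)_m` of the coadjoint representation of `g` is equivalent, as a representation of
`g_m`, to the coadjoint representation `(ad_m)*` of the Takiff algebra. -/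
theorem revMap_involutive_and_equivalence (m : ℕ) :
    (∀ F : Fin (m + 1) → Module.Dual K g, revMap (revMap F) = F) ∧
    ∃ e : (Fin (m + 1) → Module.Dual K g) ≃ₗ[K] (Fin (m + 1) → Module.Dual K g),
      ∀ (X : Fin (m + 1) → g) (F : Fin (m + 1) → Module.Dual K g),
        takiffCoadjoint X F = e (coadTakiff X (e.symm F)) := by
  constructor
  · intro F
    funext k
    simp [revMap, Fin.rev_rev]
  · refine ⟨LinearEquiv.funCongrLeft K (Module.Dual K g)
      (Fin.revPerm : Fin (m + 1) ≃ Fin (m + 1)), ?_⟩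
    intro X F
    funext k
    have he : ∀ (G : Fin (m + 1) → Module.Dual K g) (j : Fin (m + 1)),
        (LinearEquiv.funCongrLeft K (Module.Dual K g)
          (Fin.revPerm : Fin (m + 1) ≃ Fin (m + 1))) G j = G j.rev := by
      intro G j; rfl
    have he' : ∀ (G : Fin (m + 1) → Module.Dual K g) (j : Fin (m + 1)),
        (LinearEquiv.funCongrLeft K (Module.Dual K g)
          (Fin.revPerm : Fin (m + 1) ≃ Fin (m + 1))).symm G j = G j.rev := by
      intro G j
      simp [LinearEquiv.funCongrLeft, LinearEquiv.piCongrLeft']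
    rw [he]
    show takiffCoadjoint X F k = coadTakiff X _ k.rev
    unfold takiffCoadjoint coadTakiff
    apply Finset.sum_congr rfl
    intro r _
    have hk : (k : ℕ) ≤ m := Nat.lt_succ_iff.mp k.isLt
    have hr : (r : ℕ) ≤ m := Nat.lt_succ_iff.mp r.isLt
    have hc : ((k : ℕ) + (r : ℕ) ≤ m) ↔ ((r : ℕ) ≤ (k.rev : ℕ)) := by
      rw [Fin.val_rev]; omega
    by_cases h : (k : ℕ) + (r : ℕ) ≤ m
    · rw [if_pos h, if_pos (hc.mp h), he', rev_sub_key k r h]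
    · rw [if_neg h, if_neg (fun hh => h (hc.mpr hh))]
end

section
/- Let g be a quadratic Lie algebra, i.e. g carries a nondegenerate symmetric bilinear form B which is invariant: B([x,y],z) = B(x,[y,z]). Then the generalized Takiff algebra g_m is also quadratic: the bilinear form B_m(∑ x_r T^r, ∑ y_s T^s) = ∑_{r+s=m} B(x_r, y_s) is symmetric, nondegenerate, and invariant on g_m. -/
open Finset

/-- The Takiff bracket on `g_m`: `[X,Y]_k = ∑_{r+s=k} [x_r, y_s]`. -/
def takiffBracket {g : Type*} [LieRing g] (m : ℕ) (X Y : Fin (m + 1) → g) :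
    Fin (m + 1) → g :=
  fun k => ∑ r : Fin (m + 1), if (r : ℕ) ≤ (k : ℕ) then ⁅X r, Y (k - r)⁆ else 0

/-- The shear equivalence used to reindex the double sum in the invariance proof. -/
def takiffShear (m : ℕ) : (Fin (m + 1) × Fin (m + 1)) ≃ (Fin (m + 1) × Fin (m + 1)) where
  toFun p := (p.2, p.1 - p.2)
  invFun p := (p.2 + p.1, p.1)
  left_inv p := by ext <;> simp
  right_inv p := by ext <;> simp

lemma takiff_sub_val_of_lt {m : ℕ} (r s : Fin (m + 1)) (h : (r : ℕ) < (s : ℕ)) :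
    ((r - s : Fin (m + 1)) : ℕ) = m + 1 + (r : ℕ) - (s : ℕ) := by
  rw [Fin.sub_def]
  have hs : (s : ℕ) ≤ m := Nat.lt_succ_iff.mp s.isLt
  have : (m + 1 - (s : ℕ) + (r : ℕ)) < m + 1 := by omega
  simp only [Nat.mod_eq_of_lt this]
  omega

/-- If `g` is a quadratic Lie algebra with invariant nondegenerate symmetric form `B`,
then the form `B_m(X, Y) = ∑_{r+s=m} B(x_r, y_s)` on the generalized Takiff algebra
`g_m` is symmetric, nondegenerate and invariant, so `g_m` is quadratic as well. -/
theorem takiff_quadratic {K : Type*} [Field K] {g : Type*} [LieRing g] [LieAlgebra K g]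
    (B : g →ₗ[K] g →ₗ[K] K)
    (hsymm : ∀ x y : g, B x y = B y x)
    (hnd : ∀ x : g, (∀ y : g, B x y = 0) → x = 0)
    (hinv : ∀ x y z : g, B ⁅x, y⁆ z = B x ⁅y, z⁆) (m : ℕ) :
    (∀ X Y : Fin (m + 1) → g,
      ∑ r : Fin (m + 1), B (X r) (Y r.rev) = ∑ r : Fin (m + 1), B (Y r) (X r.rev)) ∧
    (∀ X : Fin (m + 1) → g,
      (∀ Y : Fin (m + 1) → g, ∑ r : Fin (m + 1), B (X r) (Y r.rev) = 0) → X = 0) ∧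
    (∀ X Y Z : Fin (m + 1) → g,
      ∑ r : Fin (m + 1), B (takiffBracket m X Y r) (Z r.rev) =
        ∑ r : Fin (m + 1), B (X r) (takiffBracket m Y Z r.rev)) := by
  refine ⟨?_, ?_, ?_⟩
  · intro X Y
    calc ∑ r : Fin (m + 1), B (X r) (Y r.rev)
        = ∑ r : Fin (m + 1), B (Y r.rev) (X r) := by
          exact Finset.sum_congr rfl fun r _ => hsymm _ _
      _ = ∑ r : Fin (m + 1), B (Y r) (X r.rev) := by
          exact Fintype.sum_equiv (Fin.revPerm) _ _ (by simp)
  · intro X h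
    funext r
    apply hnd
    intro y
    have hy := h (fun s => if s = r.rev then y else 0)
    simpa [apply_ite, Fin.rev_inj, Finset.sum_ite_eq'] using hy
  · intro X Y Z
    have L : ∀ r : Fin (m + 1), B (takiffBracket m X Y r) (Z r.rev) =
        ∑ s : Fin (m + 1),
          if (s : ℕ) ≤ (r : ℕ) then B ⁅X s, Y (r - s)⁆ (Z r.rev) else 0 := by
      intro r
      simp [takiffBracket, map_sum, Finset.sum_apply, apply_ite (B ·),
        apply_ite (fun f : g →ₗ[K] K => f (Z r.rev))]
    have R : ∀ r : Fin (m + 1), B (X r) (takiffBracket m Y Z r.rev) =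
        ∑ s : Fin (m + 1),
          if (s : ℕ) ≤ (r.rev : ℕ) then B (X r) ⁅Y s, Z (r.rev - s)⁆ else 0 := by
      intro r
      simp [takiffBracket, apply_ite (B (X r))]
    simp only [L, R]
    rw [← Finset.sum_product', ← Finset.sum_product']
    refine Fintype.sum_equiv (takiffShear m) _ _ ?_
    rintro ⟨r, s⟩
    simp only [takiffShear, Equiv.coe_fn_mk]
    by_cases h : (s : ℕ) ≤ (r : ℕ)
    · have h1 : ((r - s : Fin (m + 1)) : ℕ) = (r : ℕ) - (s : ℕ) := Fin.coe_sub_iff_le.2 h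
      have hr : (r : ℕ) ≤ m := Nat.lt_succ_iff.mp r.isLt
      have h2 : ((r - s : Fin (m + 1)) : ℕ) ≤ (s.rev : ℕ) := by
        rw [h1, Fin.val_rev]; omega
      rw [if_pos h]; refine Eq.trans ?_ (if_pos h2).symm
      have h3 : s.rev - (r - s) = r.rev := by
        apply Fin.ext
        rw [Fin.coe_sub_iff_le.2 h2, Fin.val_rev, Fin.val_rev, h1]
        omega
      rw [h3, hinv]
    · have h1 : ((r - s : Fin (m + 1)) : ℕ) = m + 1 + (r : ℕ) - (s : ℕ) :=
        takiff_sub_val_of_lt r s (by omega)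
      have h2 : ¬ ((r - s : Fin (m + 1)) : ℕ) ≤ (s.rev : ℕ) := by
        rw [h1, Fin.val_rev]
        have hs : (s : ℕ) ≤ m := Nat.lt_succ_iff.mp s.isLt
        omega
      rw [if_neg h]; exact (if_neg h2).symm
end

section
/- Let a : ℝ^n → ℝ^n be a polynomial vector field such that ∑_i a_i(x) x_i = 0 identically. Then there exist polynomial functions b_{ij} on ℝ^n with b_{ij} = -b_{ji} such that a_i(x) = ∑_j b_{ij}(x) x_j for all x and all i. Equivalently, a is a combination, with polynomial coefficients, of the rotational vector fields x_j ∂/∂x_i - x_i ∂/∂x_j. -/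
open Finset MvPolynomial

private lemma psi_rename {n : ℕ} (q : MvPolynomial (Fin n) ℝ) :
    aeval (R := ℝ) (Fin.cases 0 X) (rename Fin.succ q) = q := by
  rw [aeval_rename]
  have : ((Fin.cases 0 X : Fin (n+1) → MvPolynomial (Fin n) ℝ) ∘ Fin.succ) = X := by
    funext i; simp
  rw [this, aeval_X_left_apply]

private lemma decomp {n : ℕ} (p : MvPolynomial (Fin (n+1)) ℝ) :
    ∃ q, p = X 0 * q + rename Fin.succ (aeval (R := ℝ) (Fin.cases 0 X) p) := by
  induction p using MvPolynomial.induction_on with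
  | C r => exact ⟨0, by simp [algebraMap_eq]⟩
  | add p p' hp hp' =>
    obtain ⟨q, hq⟩ := hp; obtain ⟨q', hq'⟩ := hp'
    refine ⟨q + q', ?_⟩
    rw [map_add, map_add]
    nth_rewrite 1 [hq, hq']
    ring
  | mul_X p i hp =>
    obtain ⟨q, hq⟩ := hp
    cases i using Fin.cases with
    | zero =>
      refine ⟨p, ?_⟩
      rw [map_mul, aeval_X, Fin.cases_zero, mul_zero, map_zero, add_zero, mul_comm]
    | succ j =>
      refine ⟨q * X j.succ, ?_⟩
      rw [map_mul, aeval_X, Fin.cases_succ, map_mul, rename_X]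
      nth_rewrite 1 [hq]
      ring

private lemma sum_anti {n : ℕ} {R : Type*} [CommRing R] [IsDomain R] [CharZero R]
    (m : Fin n → Fin n → R) (hm : ∀ i j, m i j = - m j i) :
    ∑ i, ∑ j, m i j = 0 := by
  have h1 : ∑ i, ∑ j, m i j = - ∑ i, ∑ j, m i j := by
    conv_lhs => rw [Finset.sum_comm]
    rw [← Finset.sum_neg_distrib]
    refine Finset.sum_congr rfl fun j _ => ?_
    rw [← Finset.sum_neg_distrib]
    exact Finset.sum_congr rfl fun i _ => hm i j
  have h2 : (2 : R) * ∑ i, ∑ j, m i j = 0 := by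
    rw [two_mul]; nth_rewrite 1 [h1]; ring
  rcases mul_eq_zero.mp h2 with h | h
  · exact absurd h two_ne_zero
  · exact h

/-- Dixmier property for the natural representation of `so(n)` on `ℝⁿ` in the polynomial
category: a polynomial vector field `a` with `∑_i a_i x_i = 0` is a combination, with
polynomial coefficients, of the rotational vector fields, i.e. `a_i = ∑_j b_{ij} x_j`
for an antisymmetric matrix `(b_{ij})` of polynomials. -/
theorem polynomial_field_annihilating_Q_is_rotational {n : ℕ}
    (a : Fin n → MvPolynomial (Fin n) ℝ)
    (h : ∑ i, a i * X i = 0) :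
    ∃ b : Fin n → Fin n → MvPolynomial (Fin n) ℝ,
      (∀ i j, b i j = -b j i) ∧ ∀ i, a i = ∑ j, b i j * X j := by
  induction n with
  | zero => exact ⟨fun i => i.elim0, fun i => i.elim0, fun i => i.elim0⟩
  | succ n ih =>
    let ψ : MvPolynomial (Fin (n+1)) ℝ →ₐ[ℝ] MvPolynomial (Fin n) ℝ := aeval (Fin.cases 0 X)
    have h' : ∑ i : Fin n, ψ (a i.succ) * X i = 0 := by
      have hh := congrArg ψ h
      rw [map_sum, map_zero, Fin.sum_univ_succ] at hh
      simpa [ψ] using hh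
    obtain ⟨b', hanti, hb'⟩ := ih _ h'
    have hc : ∀ i : Fin n, ∃ c, a i.succ = X 0 * c + ∑ j, rename Fin.succ (b' i j) * X j.succ := by
      intro i
      obtain ⟨c, hcc⟩ := decomp (a i.succ)
      have hz : aeval (R := ℝ) (Fin.cases 0 X) (a i.succ) = ψ (a i.succ) := rfl
      refine ⟨c, ?_⟩
      rw [hcc, hz]
      congr 1
      rw [hb' i, map_sum]
      refine Finset.sum_congr rfl fun j _ => ?_
      rw [map_mul, rename_X]
    choose c hcc using hc
    have hS : ∑ i : Fin n, ∑ j : Fin n,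
        rename (Fin.succ) (b' i j) * X j.succ * X i.succ = 0 := by
      refine sum_anti _ fun i j => ?_
      rw [hanti i j, map_neg]; ring
    have key : a 0 = - ∑ i, c i * X i.succ := by
      have h2 : X (0 : Fin (n+1)) * (a 0 + ∑ i, c i * X i.succ) = 0 := by
        have hh := h
        rw [Fin.sum_univ_succ] at hh
        have expand : ∑ i : Fin n, a i.succ * X i.succ
            = X 0 * ∑ i, c i * X i.succ := by
          calc ∑ i : Fin n, a i.succ * X i.succ
              = ∑ i : Fin n, (X 0 * (c i * X i.succ)
                  + ∑ j, rename Fin.succ (b' i j) * X j.succ * X i.succ) := by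
                refine Finset.sum_congr rfl fun i _ => ?_
                rw [hcc i]; rw [add_mul, Finset.sum_mul]; ring
            _ = X 0 * ∑ i, c i * X i.succ := by
                rw [Finset.sum_add_distrib, hS, add_zero, Finset.mul_sum]
        rw [expand] at hh
        rw [mul_add]
        calc X (0 : Fin (n+1)) * a 0 + X 0 * ∑ i, c i * X i.succ
            = a 0 * X 0 + X 0 * ∑ i, c i * X i.succ := by ring
          _ = 0 := hh
      rcases mul_eq_zero.mp h2 with h3 | h3
      · exact absurd h3 (X_ne_zero 0)
      · linear_combination h3
    refine ⟨Fin.cases (Fin.cases 0 fun j => - c j)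
        (fun i => Fin.cases (c i) fun j => rename Fin.succ (b' i j)), ?_, ?_⟩
    · intro i j
      induction i using Fin.cases with
      | zero =>
        induction j using Fin.cases with
        | zero => simp
        | succ j => simp
      | succ i =>
        induction j using Fin.cases with
        | zero => simp
        | succ j => simp [hanti i j]
    · intro i
      induction i using Fin.cases with
      | zero =>
        rw [Fin.sum_univ_succ]
        simp [key, Finset.sum_neg_distrib]
      | succ i =>
        rw [Fin.sum_univ_succ, hcc i]
        simp [mul_comm]
end

section
/- Let ρ : g → gl(V) be a representation of a Lie algebra on a finite-dimensional space over ℝ, with all invariants and vector fields taken in the polynomial category. If (g, ρ, V) has the Dixmier property, then so does (g_m, ρ_m, V_m) for every m ≥ 0: every polynomial vector field with parameters a : W × V_m → V_m that annihilates all polynomial g_m-invariant functions on V_m can be written a(w, F) = ρ_m(b(w,F))(F) for some polynomial map b : W × V_m → g_m. -/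
open Finset

attribute [local instance 100] LieRing.ofAssociativeRing

/-- A map `f : ℝ^ι → M` is polynomial when it is a finite sum of real polynomial
functions times fixed vectors of `M`. -/
def IsPolynomialMap {ι : Type*} [Fintype ι] {M : Type*} [AddCommGroup M] [Module ℝ M]
    (f : (ι → ℝ) → M) : Prop :=
  ∃ (N : ℕ) (P : Fin N → MvPolynomial ι ℝ) (v : Fin N → M),
    ∀ x, f x = ∑ i, MvPolynomial.eval x (P i) • v i

/-- The polynomial Dixmier property for an action `σ` of `g` on `E = ℝ^ι`: every
polynomial vector field with parameters `a : W × E → E` (with `W = ℝ^w`) annihilating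
all polynomial `g`-invariant functions on `E` is of the form `a(w,e) = σ(b(w,e))(e)`
for a polynomial map `b : W × E → g`. -/
def HasPolyDixmier {g : Type*} [AddCommGroup g] [Module ℝ g] {ι : Type*} [Fintype ι]
    (σ : g → (ι → ℝ) → (ι → ℝ)) : Prop :=
  ∀ (w : ℕ) (a : ((Fin w ⊕ ι) → ℝ) → (ι → ℝ)), IsPolynomialMap a →
    (∀ φ : (ι → ℝ) → ℝ, IsPolynomialMap φ →
      (∀ (x : g) (e : ι → ℝ), deriv (fun t : ℝ => φ (e + t • σ x e)) 0 = 0) →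
      ∀ z, deriv (fun t : ℝ => φ ((fun i => z (Sum.inr i)) + t • a z)) 0 = 0) →
    ∃ b : ((Fin w ⊕ ι) → ℝ) → g, IsPolynomialMap b ∧
      ∀ z, a z = σ (b z) fun i => z (Sum.inr i)

/-- The Takiff representation `ρ_m` of `g_m` on `V_m = ℝ^{(m+1) × d}`:
`(ρ_m(X)F)_k = ∑_{r+s=k} ρ(x_r)(f_s)`. -/
def takiffRepAct {g : Type*} [LieRing g] [LieAlgebra ℝ g] {d m : ℕ}
    (ρ : g →ₗ⁅ℝ⁆ Module.End ℝ (Fin d → ℝ))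
    (X : Fin (m + 1) → g) (F : Fin (m + 1) × Fin d → ℝ) : Fin (m + 1) × Fin d → ℝ :=
  fun ki =>
    (∑ r : Fin (m + 1),
      if (r : ℕ) ≤ (ki.1 : ℕ) then ρ (X r) (fun j => F (ki.1 - r, j)) else 0) ki.2

namespace TakiffAux
open MvPolynomial

set_option linter.unusedSectionVars false
set_option maxHeartbeats 2000000

variable {κ : Type*} [Fintype κ]

/-! ### Real-valued polynomial functions -/

/-- ℝ-valued polynomial function. -/
def PF (f : (κ → ℝ) → ℝ) : Prop := ∃ Q : MvPolynomial κ ℝ, ∀ x, f x = eval x Q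

theorem PF.const (c : ℝ) : PF (fun _ : κ → ℝ => c) := ⟨C c, by simp⟩

theorem PF.zero : PF (fun _ : κ → ℝ => (0:ℝ)) := ⟨0, by simp⟩

theorem PF.coord (j : κ) : PF (fun x : κ → ℝ => x j) := ⟨X j, by simp⟩

theorem PF.add {f h : (κ → ℝ) → ℝ} (hf : PF f) (hh : PF h) : PF (f + h) := by
  obtain ⟨Q, hQ⟩ := hf; obtain ⟨R, hR⟩ := hh
  exact ⟨Q + R, fun x => by simp [hQ, hR]⟩

theorem PF.add' {f h : (κ → ℝ) → ℝ} (hf : PF f) (hh : PF h) :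
    PF (fun x => f x + h x) := PF.add hf hh

theorem PF.mul {f h : (κ → ℝ) → ℝ} (hf : PF f) (hh : PF h) :
    PF (fun x => f x * h x) := by
  obtain ⟨Q, hQ⟩ := hf; obtain ⟨R, hR⟩ := hh
  exact ⟨Q * R, fun x => by simp [hQ, hR]⟩

theorem PF.neg {f : (κ → ℝ) → ℝ} (hf : PF f) : PF (fun x => - f x) := by
  obtain ⟨Q, hQ⟩ := hf; exact ⟨-Q, fun x => by simp [hQ]⟩

theorem PF.sub {f h : (κ → ℝ) → ℝ} (hf : PF f) (hh : PF h) :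
    PF (fun x => f x - h x) := by
  obtain ⟨Q, hQ⟩ := hf; obtain ⟨R, hR⟩ := hh
  exact ⟨Q - R, fun x => by simp [hQ, hR]⟩

theorem PF.sum {α : Type*} (s : Finset α) (f : α → (κ → ℝ) → ℝ)
    (hf : ∀ i ∈ s, PF (f i)) : PF (fun x => ∑ i ∈ s, f i x) := by
  classical
  induction s using Finset.induction_on with
  | empty => simpa using PF.zero
  | insert _ _ hx ih =>
    rename_i a s'
    simp only [Finset.sum_insert hx]
    exact PF.add' (hf a (by simp)) (ih fun i hi => hf i (by simp [hi]))

theorem PF.ite {p : Prop} [Decidable p] {f h : (κ → ℝ) → ℝ} (hf : PF f) (hh : PF h) :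
    PF (fun x => if p then f x else h x) := by
  by_cases hp : p <;> simp [hp, hf, hh]

/-- precomposition with a variable reindexing -/
theorem PF.reindex {κ' : Type*} [Fintype κ'] {f : (κ → ℝ) → ℝ} (hf : PF f)
    (σ : κ → κ') : PF (fun z : κ' → ℝ => f (fun i => z (σ i))) := by
  obtain ⟨Q, hQ⟩ := hf
  exact ⟨rename σ Q, fun z => by rw [eval_rename]; exact hQ _⟩

theorem isPolynomialMap_iff_pf (f : (κ → ℝ) → ℝ) : IsPolynomialMap f ↔ PF f := by
  constructor
  · rintro ⟨N, P, v, hf⟩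
    exact ⟨∑ i, C (v i) * P i, fun x => by simp [hf, smul_eq_mul, mul_comm]⟩
  · rintro ⟨Q, hQ⟩
    exact ⟨1, fun _ => Q, fun _ => 1, fun x => by simp [hQ]⟩

theorem isPolynomialMap_pi_iff {ι : Type*} [Fintype ι] (f : (κ → ℝ) → (ι → ℝ)) :
    IsPolynomialMap f ↔ ∀ j, PF (fun x => f x j) := by
  classical
  constructor
  · rintro ⟨N, P, v, hf⟩ j
    exact ⟨∑ i, C (v i j) * P i, fun x => by simp [hf, mul_comm]⟩
  · intro h
    choose Q hQ using h
    refine ⟨Fintype.card ι, fun i => Q ((Fintype.equivFin ι).symm i),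
      fun i => Pi.single ((Fintype.equivFin ι).symm i) 1, fun x => ?_⟩
    funext j
    simp only [Finset.sum_apply, Pi.smul_apply, smul_eq_mul]
    rw [Equiv.sum_comp (Fintype.equivFin ι).symm
      (fun j' : ι => eval x (Q j') * (Pi.single j' (1:ℝ) : ι → ℝ) j)]
    simp [Pi.single_apply, hQ j x, mul_ite]

/-! ### closure properties of `IsPolynomialMap` -/

section Closure
variable {M M' : Type*} [AddCommGroup M] [Module ℝ M] [AddCommGroup M'] [Module ℝ M']

theorem ipm_zero : IsPolynomialMap (fun _ : κ → ℝ => (0 : M)) :=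
  ⟨0, Fin.elim0, Fin.elim0, by simp⟩

theorem ipm_add {f h : (κ → ℝ) → M} (hf : IsPolynomialMap f)
    (hh : IsPolynomialMap h) : IsPolynomialMap (fun x => f x + h x) := by
  obtain ⟨N1, P1, v1, h1⟩ := hf; obtain ⟨N2, P2, v2, h2⟩ := hh
  refine ⟨N1 + N2, Fin.append P1 P2, Fin.append v1 v2, fun x => ?_⟩
  rw [Fin.sum_univ_add]
  simp [Fin.append_left, Fin.append_right, h1, h2]

theorem ipm_sum {α : Type*} (s : Finset α) (f : α → (κ → ℝ) → M)
    (hf : ∀ i ∈ s, IsPolynomialMap (f i)) :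
    IsPolynomialMap (fun x => ∑ i ∈ s, f i x) := by
  classical
  induction s using Finset.induction_on with
  | empty => simpa using ipm_zero
  | insert _ _ hx ih =>
    rename_i a s'
    simp only [Finset.sum_insert hx]
    exact ipm_add (hf a (by simp)) (ih fun i hi => hf i (by simp [hi]))

theorem ipm_linComp {f : (κ → ℝ) → M} (hf : IsPolynomialMap f)
    (L : M →ₗ[ℝ] M') : IsPolynomialMap (fun x => L (f x)) := by
  obtain ⟨N, P, v, h⟩ := hf
  exact ⟨N, P, fun i => L (v i), fun x => by simp [h, map_sum, map_smul]⟩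

theorem ipm_reindex {κ' : Type*} [Fintype κ'] {f : (κ → ℝ) → M}
    (hf : IsPolynomialMap f) (σ : κ → κ') :
    IsPolynomialMap (fun z : κ' → ℝ => f (fun i => z (σ i))) := by
  obtain ⟨N, P, v, h⟩ := hf
  exact ⟨N, fun i => rename σ (P i), v, fun z => by
    simp only [eval_rename]; exact h _⟩

end Closure

/-! ### derivative of a polynomial along a line -/

theorem hasDerivAt_eval_add_smul (Q : MvPolynomial κ ℝ) (e v : κ → ℝ) (t₀ : ℝ) :
    HasDerivAt (fun t : ℝ => eval (e + t • v) Q)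
      (∑ j, v j * eval (e + t₀ • v) (pderiv j Q)) t₀ := by
  classical
  induction Q using MvPolynomial.induction_on with
  | C a => simpa using hasDerivAt_const t₀ a
  | add p q hp hq =>
    have := hp.add hq
    simp only [map_add, mul_add, Finset.sum_add_distrib] at *
    exact this
  | mul_X p n hp =>
    have h2 : HasDerivAt (fun t : ℝ => e n + t * v n) (v n) t₀ := by
      simpa using ((hasDerivAt_id t₀).mul_const (v n)).const_add (e n)
    have key := hp.mul h2
    have heq : (fun t : ℝ => eval (e + t • v) (p * X n)) =
        fun t : ℝ => eval (e + t • v) p * (e n + t * v n) := by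
      funext t; simp [smul_eq_mul]
    rw [heq]
    refine key.congr_deriv ?_
    symm
    simp only [pderiv_mul, pderiv_X, map_add, map_mul, eval_X, Pi.add_apply, Pi.smul_apply,
      smul_eq_mul, mul_add, Finset.sum_add_distrib, Finset.mul_sum, Finset.sum_mul]
    have h3 : ∀ j, v j * (eval (e + t₀ • v) p * eval (e + t₀ • v) ((Pi.single j 1 : κ → MvPolynomial κ ℝ) n))
        = eval (e + t₀ • v) p * (if j = n then v j else 0) := by
      intro j
      rcases eq_or_ne j n with h | h <;> simp [Pi.single_apply, h] <;> ring
    rw [Finset.sum_congr rfl fun j _ => h3 j]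
    simp [Finset.sum_ite_eq', mul_comm, mul_assoc, mul_left_comm]

theorem deriv_eval_add_smul (Q : MvPolynomial κ ℝ) (e v : κ → ℝ) :
    deriv (fun t : ℝ => eval (e + t • v) Q) 0 = ∑ j, v j * eval e (pderiv j Q) := by
  have h := (hasDerivAt_eval_add_smul Q e v 0).deriv
  simpa using h



variable {d m : ℕ}

abbrev Idx (m d : ℕ) := Fin (m+1) × Fin d

noncomputable def uSub (m d : ℕ) (j : Fin d) : Polynomial (MvPolynomial (Idx m d) ℝ) :=
  ∑ s : Fin (m+1), Polynomial.C (X (s, j)) * Polynomial.X ^ (s : ℕ)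

noncomputable def Psi (m d : ℕ) :
    MvPolynomial (Fin d) ℝ →ₐ[ℝ] Polynomial (MvPolynomial (Idx m d) ℝ) :=
  aeval (uSub m d)

theorem coeff_uSub (j : Fin d) (p : ℕ) :
    (uSub m d j).coeff p = if h : p ≤ m then X (⟨p, by omega⟩, j) else 0 := by
  classical
  rw [uSub, Polynomial.finset_sum_coeff]
  simp only [Polynomial.C_mul_X_pow_eq_monomial, Polynomial.coeff_monomial]
  split
  · next h =>
    rw [Finset.sum_eq_single (⟨p, by omega⟩ : Fin (m+1))]
    · simp
    · intro s _ hs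
      simp only [ite_eq_right_iff]
      intro hv
      exact absurd (Fin.ext hv) hs
    · simp
  · next h =>
    apply Finset.sum_eq_zero
    intro s _
    simp only [ite_eq_right_iff]
    intro hv; omega
  

noncomputable def coeffDeriv (sj : Idx m d) (P : Polynomial (MvPolynomial (Idx m d) ℝ)) :
    Polynomial (MvPolynomial (Idx m d) ℝ) :=
  ∑ n ∈ P.support, Polynomial.C (pderiv sj (P.coeff n)) * Polynomial.X ^ n

theorem coeff_coeffDeriv (sj : Idx m d) (P : Polynomial (MvPolynomial (Idx m d) ℝ)) (k : ℕ) :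
    (coeffDeriv sj P).coeff k = pderiv sj (P.coeff k) := by
  classical
  rw [coeffDeriv, Polynomial.finset_sum_coeff]
  simp only [Polynomial.C_mul_X_pow_eq_monomial, Polynomial.coeff_monomial]
  rw [Finset.sum_ite_eq' P.support k (fun n => pderiv sj (P.coeff n))]
  split
  · rfl
  · next h =>
    rw [Polynomial.notMem_support_iff.mp h, map_zero]

theorem coeffDeriv_add (sj : Idx m d) (P R : Polynomial (MvPolynomial (Idx m d) ℝ)) :
    coeffDeriv sj (P + R) = coeffDeriv sj P + coeffDeriv sj R := by
  refine Polynomial.ext fun k => ?_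
  simp [coeff_coeffDeriv]

theorem coeffDeriv_mul (sj : Idx m d) (P R : Polynomial (MvPolynomial (Idx m d) ℝ)) :
    coeffDeriv sj (P * R) = coeffDeriv sj P * R + P * coeffDeriv sj R := by
  refine Polynomial.ext fun k => ?_
  simp only [coeff_coeffDeriv, Polynomial.coeff_mul, Polynomial.coeff_add, map_sum,
    pderiv_mul, Finset.sum_add_distrib]

theorem coeffDeriv_uSub (s : Fin (m+1)) (j : Fin d) (n : Fin d) :
    coeffDeriv (s, j) (uSub m d n) =
      if n = j then (Polynomial.X : Polynomial (MvPolynomial (Idx m d) ℝ)) ^ (s:ℕ) else 0 := by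
  classical
  refine Polynomial.ext fun k => ?_
  rw [coeff_coeffDeriv, coeff_uSub]
  rcases eq_or_ne n j with h | h
  · subst h
    simp only [if_pos rfl, Polynomial.coeff_X_pow]
    split
    · next hk =>
      rw [pderiv_X]
      rcases eq_or_ne k (s:ℕ) with hks | hks
      · have h1 : (⟨k, by omega⟩ : Fin (m+1)) = s := Fin.ext hks
        rw [h1, Pi.single_eq_same]
        simp [hks]
      · have : ((⟨k, by omega⟩ : Fin (m+1)), n) ≠ ((s, n) : Idx m d) := by
          simp only [ne_eq, Prod.mk.injEq, not_and]
          intro hc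
          exact absurd (congrArg Fin.val hc) hks
        rw [Pi.single_eq_of_ne this]
        simp [eq_comm, hks]
    · next hk =>
      have h2 : (s:ℕ) ≠ k := by omega
      simp [Ne.symm h2]
  · simp only [if_neg h]
    split
    · next hk =>
      rw [pderiv_X]
      have : ((⟨k, by omega⟩ : Fin (m+1)), n) ≠ ((s, j) : Idx m d) := by
        simp only [ne_eq, Prod.mk.injEq, not_and]
        intro _ hc
        exact absurd hc h
      rw [Pi.single_eq_of_ne this]
      simp
    · simp

theorem coeffDeriv_Psi (s : Fin (m+1)) (j : Fin d) (Q : MvPolynomial (Fin d) ℝ) :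
    coeffDeriv (s, j) (Psi m d Q) = Polynomial.X ^ (s:ℕ) * Psi m d (pderiv j Q) := by
  classical
  induction Q using MvPolynomial.induction_on with
  | C a =>
    have h1 : Psi m d (MvPolynomial.C a) = Polynomial.C (MvPolynomial.C a) := by
      rw [Psi, aeval_C]
      rfl
    rw [h1, pderiv_C, map_zero, mul_zero]
    refine Polynomial.ext fun k => ?_
    rw [coeff_coeffDeriv, Polynomial.coeff_C]
    split <;> simp
  | add p q hp hq =>
    rw [map_add, coeffDeriv_add, hp, hq]
    simp [mul_add]
  | mul_X p n hp =>
    have hXn : Psi m d (X n) = uSub m d n := by rw [Psi, aeval_X]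
    rw [map_mul, hXn, coeffDeriv_mul, hp,
      coeffDeriv_uSub, pderiv_mul, map_add, map_mul, pderiv_X, hXn]
    rcases eq_or_ne n j with h | h
    · subst h
      rw [if_pos rfl, Pi.single_eq_same, mul_one]
      ring
    · rw [if_neg h, Pi.single_eq_of_ne h]
      simp only [MulZeroClass.mul_zero, map_zero, add_zero]
      ring

theorem pderiv_coeff_Psi (s : Fin (m+1)) (j : Fin d) (Q : MvPolynomial (Fin d) ℝ) (k : ℕ) :
    pderiv (s, j) ((Psi m d Q).coeff k) =
      if (s:ℕ) ≤ k then (Psi m d (pderiv j Q)).coeff (k - s) else 0 := by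
  rw [← coeff_coeffDeriv, coeffDeriv_Psi, mul_comm, Polynomial.coeff_mul_X_pow']


/-- single-variable decomposition -/
theorem pi_single_decomp (e : Fin d → ℝ) :
    e = ∑ i, e i • (Pi.single i 1 : Fin d → ℝ) := by
  funext i'
  rw [Finset.sum_apply]
  simp [Pi.single_apply, mul_ite, eq_comm]

noncomputable def linPoly (L : (Fin d → ℝ) →ₗ[ℝ] (Fin d → ℝ)) (j : Fin d) :
    MvPolynomial (Fin d) ℝ :=
  ∑ i, C (L (Pi.single i 1) j) * X i

theorem eval_linPoly (L : (Fin d → ℝ) →ₗ[ℝ] (Fin d → ℝ)) (j : Fin d) (e : Fin d → ℝ) :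
    eval e (linPoly L j) = L e j := by
  conv_rhs => rw [pi_single_decomp e]
  rw [map_sum, Finset.sum_apply]
  simp [linPoly, mul_comm]

noncomputable def linPolySlice (m : ℕ) (L : (Fin d → ℝ) →ₗ[ℝ] (Fin d → ℝ))
    (s : Fin (m+1)) (j : Fin d) : MvPolynomial (Idx m d) ℝ :=
  ∑ i, C (L (Pi.single i 1) j) * X (s, i)

theorem eval_linPolySlice (L : (Fin d → ℝ) →ₗ[ℝ] (Fin d → ℝ)) (s : Fin (m+1)) (j : Fin d)
    (F : Idx m d → ℝ) :
    eval F (linPolySlice m L s j) = L (fun i => F (s, i)) j := by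
  conv_rhs => rw [pi_single_decomp (fun i => F (s, i))]
  rw [map_sum, Finset.sum_apply]
  simp [linPolySlice, mul_comm]

theorem coeff_Psi_linPoly (L : (Fin d → ℝ) →ₗ[ℝ] (Fin d → ℝ)) (j : Fin d) (p : ℕ) :
    (Psi m d (linPoly L j)).coeff p =
      if h : p ≤ m then linPolySlice m L ⟨p, by omega⟩ j else 0 := by
  rw [linPoly, map_sum, Polynomial.finset_sum_coeff]
  have h1 : ∀ i : Fin d, (Psi m d (C (L (Pi.single i 1) j) * X i)).coeff p
      = C (L (Pi.single i 1) j) * (uSub m d i).coeff p := by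
    intro i
    rw [map_mul, show Psi m d (X i) = uSub m d i from by rw [Psi, aeval_X],
      show Psi m d (C (L (Pi.single i 1) j)) = Polynomial.C (C (L (Pi.single i 1) j)) from by
        rw [Psi, aeval_C]; rfl,
      Polynomial.coeff_C_mul]
  rw [Finset.sum_congr rfl fun i _ => h1 i]
  by_cases h : p ≤ m
  · simp only [coeff_uSub, dif_pos h, linPolySlice]
  · simp only [coeff_uSub, dif_neg h, mul_zero, Finset.sum_const_zero]

theorem eval_coeff_zero_Psi (F : Idx m d → ℝ) (p : MvPolynomial (Fin d) ℝ) :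
    eval F ((Psi m d p).coeff 0) = eval (fun j => F (0, j)) p := by
  induction p using MvPolynomial.induction_on with
  | C a =>
    rw [show Psi m d (C a) = Polynomial.C (C a) from by rw [Psi, aeval_C]; rfl]
    simp
  | add p q hp hq => simp [map_add, hp, hq]
  | mul_X p n hp =>
    rw [map_mul, show Psi m d (X n) = uSub m d n from by rw [Psi, aeval_X],
      Polynomial.mul_coeff_zero, map_mul, hp, coeff_uSub]
    have h0 : (0:ℕ) ≤ m := Nat.zero_le m
    rw [dif_pos h0]
    have : ((⟨0, by omega⟩ : Fin (m+1)), n) = ((0 : Fin (m+1)), n) := by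
      simp [Fin.ext_iff]
    rw [this]
    simp

/-- triangular double-sum reindexing -/
theorem tri_sum (m B : ℕ) (hB : B ≤ m) (g : ℕ → ℕ → ℝ) :
    ∑ s ∈ range (m+1), (if s ≤ B then
        (∑ r ∈ range (m+1), if r ≤ s then g r (s - r) else 0) else 0)
      = ∑ r ∈ range (m+1), (if r ≤ B then ∑ p ∈ range (B - r + 1), g r p else 0) := by
  rw [← Finset.sum_filter, ← Finset.sum_filter]
  have hf1 : (range (m+1)).filter (fun s => s ≤ B) = range (B+1) := by
    ext s; simp; omega
  rw [hf1]
  have hstep : ∀ s ∈ range (B+1),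
      (∑ r ∈ range (m+1), if r ≤ s then g r (s - r) else 0)
        = ∑ r ∈ range (B+1), if r ≤ s then g r (s - r) else 0 := by
    intro s hs
    simp only [Finset.mem_range] at hs
    rw [← Finset.sum_filter, ← Finset.sum_filter]
    congr 1
    ext r; simp; omega
  rw [Finset.sum_congr rfl hstep, Finset.sum_comm]
  refine Finset.sum_congr rfl fun r hr => ?_
  simp only [Finset.mem_range] at hr
  rw [← Finset.sum_filter]
  have hf2 : (range (B+1)).filter (fun s => r ≤ s) = Finset.Ico r (B+1) := by
    ext s; simp; omega
  rw [hf2, Finset.sum_Ico_eq_sum_range]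
  have : B + 1 - r = B - r + 1 := by omega
  rw [this]
  exact Finset.sum_congr rfl fun p _ => by simp



/-! ### row extraction and bookkeeping -/

/-- padded row extraction from `ℝ^{(m+1)×d}` -/
noncomputable def Frow (m d : ℕ) (F : Idx m d → ℝ) (p : ℕ) : Fin d → ℝ :=
  if h : p ≤ m then (fun i => F (⟨p, by omega⟩, i)) else 0

/-- padded evaluation of a `Fin (m+1)`-indexed family at a natural number -/
noncomputable def natX {α : Type*} [Zero α] (m : ℕ) (X : Fin (m+1) → α) (r : ℕ) : α :=
  if h : r ≤ m then X ⟨r, by omega⟩ else 0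

theorem tri_sum' (m B : ℕ) (hB : B ≤ m) (g : ℕ → ℕ → ℝ) :
    ∑ s ∈ range (m+1), (if s ≤ B then
        (∑ r ∈ range (m+1), if r ≤ s then g r (s - r) else 0) else 0)
      = ∑ r ∈ range (m+1), (if r ≤ B then ∑ p ∈ range (B - r + 1), g r p else 0) :=
  tri_sum m B hB g

section Rho
variable {g : Type*} [LieRing g] [LieAlgebra ℝ g] {d m : ℕ}
  (ρ : g →ₗ⁅ℝ⁆ Module.End ℝ (Fin d → ℝ))

theorem takiff_entry (X : Fin (m+1) → g) (FF : Idx m d → ℝ) (k' : Fin (m+1)) (j : Fin d) :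
    takiffRepAct ρ X FF (k', j) = ∑ r ∈ range (m+1),
      if r ≤ (k' : ℕ) then ρ (natX m X r) (Frow m d FF ((k' : ℕ) - r)) j else 0 := by
  classical
  rw [takiffRepAct]
  simp only [Finset.sum_apply]
  have h1 : ∀ r : Fin (m+1),
      (if (r : ℕ) ≤ ((k', j).1 : ℕ) then ρ (X r) (fun j' => FF ((k', j).1 - r, j')) else 0) ((k', j).2)
      = (fun rn : ℕ => if rn ≤ (k' : ℕ) then ρ (natX m X rn) (Frow m d FF ((k' : ℕ) - rn)) j else 0) (r : ℕ) := by
    intro r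
    simp only
    by_cases hr : (r : ℕ) ≤ (k' : ℕ)
    · rw [if_pos hr, if_pos hr]
      have hx : natX m X (r : ℕ) = X r := by
        rw [natX, dif_pos (by omega : (r : ℕ) ≤ m)]
      have hsub : (⟨(k' : ℕ) - (r : ℕ), by omega⟩ : Fin (m+1)) = k' - r := by
        have hle : r ≤ k' := hr
        refine Fin.ext ?_
        rw [Fin.sub_val_of_le hle]
      have hf : Frow m d FF ((k' : ℕ) - (r : ℕ)) = fun j' => FF (k' - r, j') := by
        rw [Frow, dif_pos (by omega : (k' : ℕ) - (r : ℕ) ≤ m)]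
        funext j'
        rw [hsub]
      rw [hx, hf]
    · rw [if_neg hr, if_neg hr]
      try simp
  rw [Finset.sum_congr rfl fun r _ => h1 r]
  exact Fin.sum_univ_eq_sum_range
    (fun rn => if rn ≤ (k' : ℕ) then ρ (natX m X rn) (Frow m d FF ((k' : ℕ) - rn)) j else 0) (m+1)

theorem deriv_coeff_expand (Q : MvPolynomial (Fin d) ℝ) (K : ℕ) (F V : Idx m d → ℝ) :
    deriv (fun t : ℝ => eval (F + t • V) ((Psi m d Q).coeff K)) 0
      = ∑ s ∈ range (m+1), if s ≤ K then
          (∑ j, (if h : s ≤ m then V (⟨s, by omega⟩, j) else 0)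
            * eval F ((Psi m d (pderiv j Q)).coeff (K - s))) else 0 := by
  classical
  rw [deriv_eval_add_smul, Fintype.sum_prod_type]
  have h1 : ∀ (s : Fin (m+1)) (j : Fin d),
      V (s, j) * eval F (pderiv (s, j) ((Psi m d Q).coeff K))
      = if (s : ℕ) ≤ K then (if h : (s : ℕ) ≤ m then V (⟨(s : ℕ), by omega⟩, j) else 0)
          * eval F ((Psi m d (pderiv j Q)).coeff (K - (s : ℕ))) else 0 := by
    intro s j
    rw [pderiv_coeff_Psi]
    by_cases hs : (s : ℕ) ≤ K
    · rw [if_pos hs, if_pos hs, dif_pos (by omega : (s : ℕ) ≤ m), Fin.eta]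
    · rw [if_neg hs, if_neg hs, map_zero, mul_zero]
  rw [Finset.sum_congr rfl fun s _ => Finset.sum_congr rfl fun j _ => h1 s j]
  have h2 : ∀ s : Fin (m+1),
      (∑ j, if (s : ℕ) ≤ K then (if h : (s : ℕ) ≤ m then V (⟨(s : ℕ), by omega⟩, j) else 0)
          * eval F ((Psi m d (pderiv j Q)).coeff (K - (s : ℕ))) else 0)
      = (fun sn : ℕ => if sn ≤ K then
          (∑ j, (if h : sn ≤ m then V (⟨sn, by omega⟩, j) else 0)
            * eval F ((Psi m d (pderiv j Q)).coeff (K - sn))) else 0) ((s : ℕ)) := by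
    intro s
    simp only
    by_cases hs : (s : ℕ) ≤ K
    · rw [if_pos hs]
      exact Finset.sum_congr rfl fun j _ => by rw [if_pos hs]
    · rw [if_neg hs]
      exact Finset.sum_eq_zero fun j _ => by rw [if_neg hs]
  rw [Finset.sum_congr rfl fun s _ => h2 s]
  exact Fin.sum_univ_eq_sum_range
    (fun sn => if sn ≤ K then
      (∑ j, (if h : sn ≤ m then V (⟨sn, by omega⟩, j) else 0)
        * eval F ((Psi m d (pderiv j Q)).coeff (K - sn))) else 0) (m+1)

theorem key_identity (Q : MvPolynomial (Fin d) ℝ) (L : Module.End ℝ (Fin d → ℝ))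
    (hL : (∑ j, linPoly L j * pderiv j Q) = 0) (F : Idx m d → ℝ) (l : ℕ) :
    ∑ p ∈ range (l+1), ∑ j, L (Frow m d F p) j
      * eval F ((Psi m d (pderiv j Q)).coeff (l - p)) = 0 := by
  classical
  have SKey : ∑ j, Psi m d (linPoly L j) * Psi m d (pderiv j Q) = 0 := by
    have h := congrArg (Psi m d) hL
    rw [map_sum, map_zero] at h
    simpa [map_mul] using h
  have h0 := congrArg (fun P : Polynomial (MvPolynomial (Idx m d) ℝ) => eval F (P.coeff l)) SKey
  simp only [Polynomial.finset_sum_coeff, Polynomial.coeff_mul, Polynomial.coeff_zero,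
    map_zero, map_sum, map_mul] at h0
  -- h0 : ∑ j, ∑ pq ∈ antidiagonal l, eval F (coeff pq.1 (Psi (linPoly L j))) * eval F (coeff pq.2 (Psi (∂ⱼ Q))) = 0
  rw [Finset.sum_comm] at h0
  have h1 : ∀ pq ∈ Finset.HasAntidiagonal.antidiagonal l, ∀ j : Fin d,
      eval F ((Psi m d (linPoly L j)).coeff pq.1) * eval F ((Psi m d (pderiv j Q)).coeff pq.2)
      = (fun pq' : ℕ × ℕ => L (Frow m d F pq'.1) j * eval F ((Psi m d (pderiv j Q)).coeff pq'.2)) pq := by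
    intro pq _ j
    simp only
    congr 1
    rw [coeff_Psi_linPoly]
    by_cases hp : pq.1 ≤ m
    · rw [dif_pos hp, eval_linPolySlice, Frow, dif_pos hp]
    · rw [dif_neg hp, Frow, dif_neg hp, map_zero, map_zero]
      simp
  rw [Finset.sum_congr rfl fun pq hpq => Finset.sum_congr rfl fun j _ => h1 pq hpq j] at h0
  rw [Finset.Nat.sum_antidiagonal_eq_sum_range_succ_mk
    (fun pq : ℕ × ℕ => ∑ j, L (Frow m d F pq.1) j * eval F ((Psi m d (pderiv j Q)).coeff pq.2)) l] at h0
  exact h0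

theorem lifted_invariant (Q : MvPolynomial (Fin d) ℝ)
    (hRel : ∀ x : g, (∑ j, linPoly ((ρ x : Module.End ℝ (Fin d → ℝ))) j * pderiv j Q) = 0)
    (K : ℕ) (hK : K ≤ m) (X : Fin (m+1) → g) (FF : Idx m d → ℝ) :
    deriv (fun t : ℝ => eval (FF + t • takiffRepAct ρ X FF) ((Psi m d Q).coeff K)) 0 = 0 := by
  classical
  rw [deriv_coeff_expand]
  have h1 : ∀ s ∈ range (m+1),
      (if s ≤ K then
        (∑ j, (if h : s ≤ m then takiffRepAct ρ X FF (⟨s, by omega⟩, j) else 0)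
          * eval FF ((Psi m d (pderiv j Q)).coeff (K - s))) else 0)
      = (if s ≤ K then
          (∑ r ∈ range (m+1), if r ≤ s then
            (∑ j, ρ (natX m X r) (Frow m d FF (s - r)) j
              * eval FF ((Psi m d (pderiv j Q)).coeff (K - r - (s - r)))) else 0) else 0) := by
    intro s hs
    simp only [Finset.mem_range] at hs
    by_cases hsK : s ≤ K
    · rw [if_pos hsK, if_pos hsK]
      have hsm : s ≤ m := by omega
      have hterm : ∀ j : Fin d,
          (if h : s ≤ m then takiffRepAct ρ X FF (⟨s, by omega⟩, j) else 0)
            * eval FF ((Psi m d (pderiv j Q)).coeff (K - s))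
          = ∑ r ∈ range (m+1), if r ≤ s then
              ρ (natX m X r) (Frow m d FF (s - r)) j
                * eval FF ((Psi m d (pderiv j Q)).coeff (K - s)) else 0 := by
        intro j
        rw [dif_pos hsm, takiff_entry ρ X FF ⟨s, by omega⟩ j, Finset.sum_mul]
        refine Finset.sum_congr rfl fun r _ => ?_
        rw [ite_mul, zero_mul]
      rw [Finset.sum_congr rfl fun j _ => hterm j, Finset.sum_comm]
      refine Finset.sum_congr rfl fun r hr => ?_
      by_cases hrs : r ≤ s
      · rw [if_pos hrs]
        refine Finset.sum_congr rfl fun j _ => ?_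
        have hKs : K - r - (s - r) = K - s := by omega
        rw [if_pos hrs, hKs]
      · rw [if_neg hrs]
        exact Finset.sum_eq_zero fun j _ => by rw [if_neg hrs]
    · rw [if_neg hsK, if_neg hsK]
  rw [Finset.sum_congr rfl h1]
  rw [tri_sum' m K hK (fun r p => ∑ j, ρ (natX m X r) (Frow m d FF p) j
    * eval FF ((Psi m d (pderiv j Q)).coeff (K - r - p)))]
  refine Finset.sum_eq_zero fun r hr => ?_
  by_cases hrK : r ≤ K
  · rw [if_pos hrK]
    exact key_identity (m := m) Q (ρ (natX m X r)) (hRel (natX m X r)) FF (K - r)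
  · rw [if_neg hrK]
end Rho


section Rho2
variable {g : Type*} [LieRing g] [LieAlgebra ℝ g] {d : ℕ}
  (ρ : g →ₗ⁅ℝ⁆ Module.End ℝ (Fin d → ℝ))

theorem pf_rho_comp {κ : Type*} [Fintype κ]
    {b : (κ → ℝ) → g} (hb : IsPolynomialMap b)
    {u : (κ → ℝ) → (Fin d → ℝ)} (hu : ∀ i, PF (fun z => u z i)) (j : Fin d) :
    PF (fun z => ρ (b z) (u z) j) := by
  classical
  obtain ⟨N, P, v, hbv⟩ := hb
  have key : ∀ z, ρ (b z) (u z) j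
      = ∑ q, eval z (P q) * (∑ i, u z i * ρ (v q) (Pi.single i 1) j) := by
    intro z
    rw [hbv]
    have h1 : ρ (∑ q, eval z (P q) • v q) = ∑ q, eval z (P q) • ρ (v q) := by
      have h0 := map_sum ρ.toLinearMap (fun q => eval z (P q) • v q) Finset.univ
      simp only [map_smul, LieHom.coe_toLinearMap] at h0
      exact h0
    rw [h1]
    rw [LinearMap.sum_apply]
    rw [Finset.sum_apply]
    refine Finset.sum_congr rfl fun q _ => ?_
    rw [LinearMap.smul_apply, Pi.smul_apply, smul_eq_mul]
    congr 1
    conv_lhs => rw [pi_single_decomp (u z)]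
    rw [map_sum, Finset.sum_apply]
    refine Finset.sum_congr rfl fun i _ => ?_
    rw [map_smul, Pi.smul_apply, smul_eq_mul]
  have : (fun z => ρ (b z) (u z) j)
      = fun z => ∑ q, eval z (P q) * (∑ i, u z i * ρ (v q) (Pi.single i 1) j) :=
    funext key
  rw [this]
  refine PF.sum _ _ fun q _ => PF.mul ⟨P q, fun _ => rfl⟩ ?_
  exact PF.sum _ _ fun i _ => PF.mul (hu i) (PF.const _)

end Rho2

/-! ### the parameter-space equivalence -/

def rowEquiv (m d : ℕ) : (Fin m × Fin d) ⊕ Fin d ≃ Fin (m+1) × Fin d where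
  toFun := Sum.elim (fun si => (si.1.succ, si.2)) fun i => ((0 : Fin (m+1)), i)
  invFun ki := Fin.cases (Sum.inr ki.2) (fun s => Sum.inl (s, ki.2)) ki.1
  left_inv := by rintro (⟨s, i⟩ | i) <;> simp
  right_inv := by
    rintro ⟨k, i⟩
    refine Fin.cases ?_ (fun s => ?_) k <;> simp

def bigEquiv (w m d : ℕ) : (Fin (w + m * d) ⊕ Fin d) ≃ (Fin w ⊕ (Fin (m+1) × Fin d)) :=
  ((finSumFinEquiv.symm).sumCongr (Equiv.refl (Fin d))).trans
    ((Equiv.sumAssoc _ _ _).trans ((Equiv.refl (Fin w)).sumCongr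
      (((finProdFinEquiv.symm).sumCongr (Equiv.refl (Fin d))).trans (rowEquiv m d))))

theorem bigEquiv_inr (w m d : ℕ) (i : Fin d) :
    bigEquiv w m d (Sum.inr i) = Sum.inr ((0 : Fin (m+1)), i) := by
  simp [bigEquiv, rowEquiv]


/-! ### the inductive step -/

section Step
variable {g : Type*} [LieRing g] [LieAlgebra ℝ g] {d m w : ℕ}

theorem step (ρ : g →ₗ⁅ℝ⁆ Module.End ℝ (Fin d → ℝ))
    (hD : HasPolyDixmier fun x (v : Fin d → ℝ) => ρ x v)
    (a : ((Fin w ⊕ (Fin (m+1) × Fin d)) → ℝ) → (Fin (m+1) × Fin d) → ℝ)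
    (ha : ∀ ki, PF (fun z => a z ki))
    (hAnn : ∀ φ : ((Fin (m+1) × Fin d) → ℝ) → ℝ, IsPolynomialMap φ →
      (∀ (X : Fin (m+1) → g) (e : (Fin (m+1) × Fin d) → ℝ),
        deriv (fun t : ℝ => φ (e + t • takiffRepAct ρ X e)) 0 = 0) →
      ∀ z, deriv (fun t : ℝ => φ ((fun i => z (Sum.inr i)) + t • a z)) 0 = 0)
    (K : ℕ) (hK : K ≤ m)
    (bb : Fin (m+1) → ((Fin w ⊕ (Fin (m+1) × Fin d)) → ℝ) → g)
    (hbbpoly : ∀ r, IsPolynomialMap (bb r))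
    (hrows : ∀ k' : Fin (m+1), (k' : ℕ) < K → ∀ z i,
      a z (k', i) = takiffRepAct ρ (fun r => bb r z) (fun ki => z (Sum.inr ki)) (k', i)) :
    ∃ bb' : Fin (m+1) → ((Fin w ⊕ (Fin (m+1) × Fin d)) → ℝ) → g,
      (∀ r, IsPolynomialMap (bb' r)) ∧
      ∀ k' : Fin (m+1), (k' : ℕ) < K + 1 → ∀ z i,
        a z (k', i) = takiffRepAct ρ (fun r => bb' r z) (fun ki => z (Sum.inr ki)) (k', i) := by
  classical
  set cf : ((Fin w ⊕ (Fin (m+1) × Fin d)) → ℝ) → Fin d → ℝ := fun zz i =>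
    a zz (⟨K, by omega⟩, i) - ∑ r ∈ range (m+1),
      (if r < K then ρ (natX m (fun r' => bb r' zz) r)
        (Frow m d (fun ki => zz (Sum.inr ki)) (K - r)) i else 0) with hcf
  -- polynomiality of the components of `cf`
  have hcPF : ∀ i : Fin d, PF (fun zz => cf zz i) := by
    intro i
    refine PF.sub (ha _) (PF.sum _ _ fun r _ => ?_)
    refine PF.ite ?_ PF.zero
    have hb : IsPolynomialMap (fun zz : (Fin w ⊕ (Fin (m+1) × Fin d)) → ℝ =>
        natX m (fun r' => bb r' zz) r) := by
      by_cases hrm : r ≤ m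
      · have h2 : (fun zz : (Fin w ⊕ (Fin (m+1) × Fin d)) → ℝ =>
            natX (α := g) m (fun r' => bb r' zz) r) = bb ⟨r, by omega⟩ :=
          funext fun zz => by rw [natX, dif_pos hrm]
        rw [h2]; exact hbbpoly _
      · have h2 : (fun zz : (Fin w ⊕ (Fin (m+1) × Fin d)) → ℝ =>
            natX (α := g) m (fun r' => bb r' zz) r) = fun _ => 0 :=
          funext fun zz => by rw [natX, dif_neg hrm]
        rw [h2]; exact ipm_zero
    refine pf_rho_comp ρ hb (fun i' => ?_) i
    by_cases hpm : K - r ≤ m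
    · have h3 : (fun zz : (Fin w ⊕ (Fin (m+1) × Fin d)) → ℝ =>
          Frow m d (fun ki => zz (Sum.inr ki)) (K - r) i')
          = fun zz => zz (Sum.inr (⟨K - r, by omega⟩, i')) :=
        funext fun zz => by rw [Frow, dif_pos hpm]
      rw [h3]; exact PF.coord _
    · have h3 : (fun zz : (Fin w ⊕ (Fin (m+1) × Fin d)) → ℝ =>
          Frow m d (fun ki => zz (Sum.inr ki)) (K - r) i')
          = fun _ => (0:ℝ) :=
        funext fun zz => by rw [Frow, dif_neg hpm]; rfl
      rw [h3]; exact PF.zero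
  have a'poly : IsPolynomialMap (fun z'' : (Fin (w + m * d) ⊕ Fin d) → ℝ =>
      cf (fun y => z'' ((bigEquiv w m d).symm y))) := by
    rw [isPolynomialMap_pi_iff]
    intro i
    exact PF.reindex (hcPF i) (fun y => (bigEquiv w m d).symm y)
  -- the corrected field annihilates all `g`-invariants
  have hInv : ∀ φ : (Fin d → ℝ) → ℝ, IsPolynomialMap φ →
      (∀ (x : g) (e : Fin d → ℝ), deriv (fun t : ℝ => φ (e + t • ρ x e)) 0 = 0) →
      ∀ z' : (Fin (w + m * d) ⊕ Fin d) → ℝ, deriv (fun t : ℝ =>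
        φ ((fun i => z' (Sum.inr i)) + t • cf (fun y => z' ((bigEquiv w m d).symm y)))) 0 = 0 := by
    intro φ hφpoly hφinv z'
    obtain ⟨Q, hQ⟩ := (isPolynomialMap_iff_pf φ).mp hφpoly
    have hRel : ∀ x : g, (∑ j, linPoly ((ρ x : Module.End ℝ (Fin d → ℝ))) j * pderiv j Q) = 0 := by
      intro x
      refine MvPolynomial.funext fun e => ?_
      have h1 := hφinv x e
      rw [show (fun t : ℝ => φ (e + t • ρ x e)) = fun t : ℝ => eval (e + t • (ρ x) e) Q from
        funext fun t => hQ _] at h1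
      rw [deriv_eval_add_smul] at h1
      rw [map_zero, map_sum]
      have h2 : ∀ j : Fin d, eval e (linPoly ((ρ x : Module.End ℝ (Fin d → ℝ))) j * pderiv j Q)
          = (ρ x) e j * eval e (pderiv j Q) := fun j => by rw [map_mul, eval_linPoly]
      rw [Finset.sum_congr rfl fun j _ => h2 j]
      exact h1
    rw [show (fun t : ℝ => φ ((fun i => z' (Sum.inr i))
          + t • cf (fun y => z' ((bigEquiv w m d).symm y))))
        = fun t : ℝ => eval ((fun i => z' (Sum.inr i))
          + t • cf (fun y => z' ((bigEquiv w m d).symm y))) Q from funext fun t => hQ _]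
    rw [deriv_eval_add_smul]
    set z : (Fin w ⊕ (Fin (m+1) × Fin d)) → ℝ := fun y => z' ((bigEquiv w m d).symm y) with hzdef
    have he0 : ∀ j : Fin d, eval (fun i => z' (Sum.inr i)) (pderiv j Q)
        = eval (fun ki => z (Sum.inr ki)) ((Psi m d (pderiv j Q)).coeff 0) := by
      intro j
      have hpt : (fun i => z' (Sum.inr i)) = fun i => z (Sum.inr ((0 : Fin (m+1)), i)) := by
        funext i
        show z' (Sum.inr i) = z' ((bigEquiv w m d).symm (Sum.inr (0, i)))
        rw [← bigEquiv_inr w m d i, Equiv.symm_apply_apply]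
      rw [eval_coeff_zero_Psi, hpt]
    rw [Finset.sum_congr rfl fun j _ => by rw [he0 j]]
    -- goal : ∑ j, cf z j * eval F ((Psi (∂ⱼQ)).coeff 0) = 0  with F = fun ki => z (inr ki)
    have hΦpoly : IsPolynomialMap (fun FF : (Fin (m+1) × Fin d) → ℝ =>
        eval FF ((Psi m d Q).coeff K)) :=
      (isPolynomialMap_iff_pf _).mpr ⟨(Psi m d Q).coeff K, fun _ => rfl⟩
    have HY : deriv (fun t : ℝ =>
        eval ((fun ki => z (Sum.inr ki)) + t • a z) ((Psi m d Q).coeff K)) 0 = 0 :=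
      hAnn _ hΦpoly (fun X e => lifted_invariant ρ Q hRel K hK X e) z
    rw [deriv_coeff_expand Q K (fun ki => z (Sum.inr ki)) (a z)] at HY
    -- split off the `s = K` term
    have hsplit : ∀ s ∈ range (m+1),
        (if s ≤ K then (∑ j, (if h : s ≤ m then a z (⟨s, by omega⟩, j) else 0)
          * eval (fun ki => z (Sum.inr ki)) ((Psi m d (pderiv j Q)).coeff (K - s))) else 0)
        = (if s < K then (∑ j, (if h : s ≤ m then a z (⟨s, by omega⟩, j) else 0)
          * eval (fun ki => z (Sum.inr ki)) ((Psi m d (pderiv j Q)).coeff (K - s))) else 0)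
        + (if s = K then (∑ j, (if h : s ≤ m then a z (⟨s, by omega⟩, j) else 0)
          * eval (fun ki => z (Sum.inr ki)) ((Psi m d (pderiv j Q)).coeff (K - s))) else 0) := by
      intro s _
      rcases lt_trichotomy s K with h | h | h
      · rw [if_pos (le_of_lt h), if_pos h, if_neg (by omega), add_zero]
      · rw [if_pos (le_of_eq h), if_neg (by omega), if_pos h, zero_add]
      · rw [if_neg (by omega), if_neg (by omega), if_neg (by omega), add_zero]
    rw [Finset.sum_congr rfl hsplit, Finset.sum_add_distrib,
      Finset.sum_ite_eq' (range (m+1)) K, if_pos (Finset.mem_range.mpr (by omega)),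
      Nat.sub_self] at HY
    simp only [dif_pos hK] at HY
    -- HY : SLT + ∑ⱼ a z (⟨K⟩,j) * G j 0 = 0
    -- substitute the established rows into SLT
    have hrow_n : ∀ s, s < K →
        (∑ j, (if h : s ≤ m then a z (⟨s, by omega⟩, j) else 0)
          * eval (fun ki => z (Sum.inr ki)) ((Psi m d (pderiv j Q)).coeff (K - s)))
        = ∑ r ∈ range (m+1), (if r ≤ s then
            (∑ j, ρ (natX m (fun r' => bb r' z) r) (Frow m d (fun ki => z (Sum.inr ki)) (s - r)) j
              * eval (fun ki => z (Sum.inr ki)) ((Psi m d (pderiv j Q)).coeff (K - r - (s - r)))) else 0) := by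
      intro s hs
      have hsm : s ≤ m := by omega
      have hterm : ∀ j : Fin d, (if h : s ≤ m then a z (⟨s, by omega⟩, j) else 0)
          = ∑ r ∈ range (m+1), (if r ≤ s then
              ρ (natX m (fun r' => bb r' z) r) (Frow m d (fun ki => z (Sum.inr ki)) (s - r)) j else 0) := by
        intro j
        rw [dif_pos hsm]
        have h4 := hrows ⟨s, by omega⟩ (by simpa using hs) z j
        rw [takiff_entry] at h4
        exact h4
      have h5 : ∀ j : Fin d, (if h : s ≤ m then a z (⟨s, by omega⟩, j) else 0)
          * eval (fun ki => z (Sum.inr ki)) ((Psi m d (pderiv j Q)).coeff (K - s))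
          = ∑ r ∈ range (m+1), (if r ≤ s then
              ρ (natX m (fun r' => bb r' z) r) (Frow m d (fun ki => z (Sum.inr ki)) (s - r)) j
                * eval (fun ki => z (Sum.inr ki)) ((Psi m d (pderiv j Q)).coeff (K - s)) else 0) := by
        intro j
        rw [hterm j, Finset.sum_mul]
        exact Finset.sum_congr rfl fun r _ => by rw [ite_mul, zero_mul]
      rw [Finset.sum_congr rfl fun j _ => h5 j, Finset.sum_comm]
      refine Finset.sum_congr rfl fun r _ => ?_
      by_cases hrs : r ≤ s
      · rw [if_pos hrs]
        refine Finset.sum_congr rfl fun j _ => ?_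
        rw [if_pos hrs, (by omega : K - r - (s - r) = K - s)]
      · rw [if_neg hrs]
        exact Finset.sum_eq_zero fun j _ => by rw [if_neg hrs]
    -- the key cancellation, row by row
    have hkey : ∀ r, r < K →
        (∑ j, ρ (natX m (fun r' => bb r' z) r) (Frow m d (fun ki => z (Sum.inr ki)) (K - r)) j
          * eval (fun ki => z (Sum.inr ki)) ((Psi m d (pderiv j Q)).coeff 0))
        = - ∑ p ∈ range (K - r),
            (∑ j, ρ (natX m (fun r' => bb r' z) r) (Frow m d (fun ki => z (Sum.inr ki)) p) j
              * eval (fun ki => z (Sum.inr ki)) ((Psi m d (pderiv j Q)).coeff (K - r - p))) := by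
      intro r hr
      have hk2 := key_identity (m := m) Q (ρ (natX m (fun r' => bb r' z) r))
        (hRel (natX m (fun r' => bb r' z) r)) (fun ki => z (Sum.inr ki)) (K - r)
      rw [Finset.sum_range_succ] at hk2
      simp only [Nat.sub_self] at hk2
      linarith [hk2]
    -- assemble
    have hgoal2 : ∑ j, cf z j
        * eval (fun ki => z (Sum.inr ki)) ((Psi m d (pderiv j Q)).coeff 0)
        = (∑ j, a z (⟨K, by omega⟩, j)
            * eval (fun ki => z (Sum.inr ki)) ((Psi m d (pderiv j Q)).coeff 0))
          - ∑ r ∈ range (m+1), (if r < K then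
              (∑ j, ρ (natX m (fun r' => bb r' z) r) (Frow m d (fun ki => z (Sum.inr ki)) (K - r)) j
                * eval (fun ki => z (Sum.inr ki)) ((Psi m d (pderiv j Q)).coeff 0)) else 0) := by
      have h6 : ∀ j : Fin d, cf z j
          * eval (fun ki => z (Sum.inr ki)) ((Psi m d (pderiv j Q)).coeff 0)
          = a z (⟨K, by omega⟩, j)
              * eval (fun ki => z (Sum.inr ki)) ((Psi m d (pderiv j Q)).coeff 0)
            - ∑ r ∈ range (m+1), (if r < K then
                ρ (natX m (fun r' => bb r' z) r) (Frow m d (fun ki => z (Sum.inr ki)) (K - r)) j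
                  * eval (fun ki => z (Sum.inr ki)) ((Psi m d (pderiv j Q)).coeff 0) else 0) := by
        intro j
        have hcfj : cf z j = a z (⟨K, by omega⟩, j) - ∑ r ∈ range (m+1),
            (if r < K then ρ (natX m (fun r' => bb r' z) r)
              (Frow m d (fun ki => z (Sum.inr ki)) (K - r)) j else 0) := rfl
        rw [hcfj, sub_mul, Finset.sum_mul]
        congr 1
        exact Finset.sum_congr rfl fun r _ => by rw [ite_mul, zero_mul]
      rw [Finset.sum_congr rfl fun j _ => h6 j]
      rw [Finset.sum_sub_distrib]
      congr 1
      rw [Finset.sum_comm]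
      refine Finset.sum_congr rfl fun r _ => ?_
      by_cases hr : r < K
      · rw [if_pos hr]; exact Finset.sum_congr rfl fun j _ => by rw [if_pos hr]
      · rw [if_neg hr]; exact Finset.sum_eq_zero fun j _ => by rw [if_neg hr]
    rw [hgoal2]
    -- rewrite the correction sum using hkey
    have h7 : ∑ r ∈ range (m+1), (if r < K then
          (∑ j, ρ (natX m (fun r' => bb r' z) r) (Frow m d (fun ki => z (Sum.inr ki)) (K - r)) j
            * eval (fun ki => z (Sum.inr ki)) ((Psi m d (pderiv j Q)).coeff 0)) else 0)
        = - ∑ r ∈ range (m+1), (if r < K then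
            (∑ p ∈ range (K - r),
              (∑ j, ρ (natX m (fun r' => bb r' z) r) (Frow m d (fun ki => z (Sum.inr ki)) p) j
                * eval (fun ki => z (Sum.inr ki)) ((Psi m d (pderiv j Q)).coeff (K - r - p)))) else 0) := by
      rw [← Finset.sum_neg_distrib]
      refine Finset.sum_congr rfl fun r _ => ?_
      by_cases hr : r < K
      · rw [if_pos hr, if_pos hr, hkey r hr]
      · rw [if_neg hr, if_neg hr, neg_zero]
    rw [h7]
    -- rewrite SLT via rows and the triangular reindexing
    have h8 : ∑ s ∈ range (m+1), (if s < K then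
          (∑ j, (if h : s ≤ m then a z (⟨s, by omega⟩, j) else 0)
            * eval (fun ki => z (Sum.inr ki)) ((Psi m d (pderiv j Q)).coeff (K - s))) else 0)
        = ∑ r ∈ range (m+1), (if r < K then
            (∑ p ∈ range (K - r),
              (∑ j, ρ (natX m (fun r' => bb r' z) r) (Frow m d (fun ki => z (Sum.inr ki)) p) j
                * eval (fun ki => z (Sum.inr ki)) ((Psi m d (pderiv j Q)).coeff (K - r - p)))) else 0) := by
      rcases Nat.eq_zero_or_pos K with hK0 | hK0
      · subst hK0
        rw [Finset.sum_eq_zero fun s _ => by rw [if_neg (by omega)],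
          Finset.sum_eq_zero fun r _ => by rw [if_neg (by omega)]]
      · have h9 : ∀ s ∈ range (m+1), (if s < K then
            (∑ j, (if h : s ≤ m then a z (⟨s, by omega⟩, j) else 0)
              * eval (fun ki => z (Sum.inr ki)) ((Psi m d (pderiv j Q)).coeff (K - s))) else 0)
            = (if s ≤ K - 1 then
              (∑ r ∈ range (m+1), (if r ≤ s then
                (∑ j, ρ (natX m (fun r' => bb r' z) r) (Frow m d (fun ki => z (Sum.inr ki)) (s - r)) j
                  * eval (fun ki => z (Sum.inr ki)) ((Psi m d (pderiv j Q)).coeff (K - r - (s - r))))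
                else 0)) else 0) := by
          intro s hs
          by_cases hsK : s < K
          · rw [if_pos hsK, if_pos (by omega : s ≤ K - 1), hrow_n s hsK]
          · rw [if_neg hsK, if_neg (by omega : ¬ s ≤ K - 1)]
        rw [Finset.sum_congr rfl h9,
          tri_sum' m (K - 1) (by omega)
            (fun r p => ∑ j, ρ (natX m (fun r' => bb r' z) r)
              (Frow m d (fun ki => z (Sum.inr ki)) p) j
              * eval (fun ki => z (Sum.inr ki)) ((Psi m d (pderiv j Q)).coeff (K - r - p)))]
        refine Finset.sum_congr rfl fun r _ => ?_
        by_cases hr : r < K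
        · rw [if_pos (by omega : r ≤ K - 1), if_pos hr,
            (by omega : K - 1 - r + 1 = K - r)]
        · rw [if_neg (by omega : ¬ r ≤ K - 1), if_neg hr]
    rw [h8] at HY
    linarith [HY]
  -- apply the Dixmier property of `ρ`
  obtain ⟨b', hb'poly, hb'eq⟩ := hD (w + m * d)
    (fun z'' => cf (fun y => z'' ((bigEquiv w m d).symm y))) a'poly hInv
  set bK : ((Fin w ⊕ (Fin (m+1) × Fin d)) → ℝ) → g :=
    fun z => b' (fun x => z (bigEquiv w m d x)) with hbKdef
  have hbKpoly : IsPolynomialMap bK :=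
    ipm_reindex hb'poly (fun x => bigEquiv w m d x)
  have hcK : ∀ z, cf z = ρ (bK z) (fun j => z (Sum.inr ((0 : Fin (m+1)), j))) := by
    intro z
    have h : cf (fun y => (fun x => z (bigEquiv w m d x)) ((bigEquiv w m d).symm y))
        = ρ (b' (fun x => z (bigEquiv w m d x)))
            (fun i => (fun x => z (bigEquiv w m d x)) (Sum.inr i)) :=
      hb'eq (fun x => z (bigEquiv w m d x))
    simp only [Equiv.apply_symm_apply, bigEquiv_inr] at h
    exact h
  refine ⟨Function.update bb ⟨K, by omega⟩ bK, ?_, ?_⟩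
  · intro r
    by_cases hr : r = ⟨K, by omega⟩
    · rw [hr, Function.update_self]; exact hbKpoly
    · rw [Function.update_of_ne hr]; exact hbbpoly r
  · intro k' hk' z i
    by_cases hk'K : (k' : ℕ) < K
    · rw [hrows k' hk'K z i, takiff_entry, takiff_entry]
      refine Finset.sum_congr rfl fun r hr => ?_
      by_cases hrk : r ≤ (k' : ℕ)
      · rw [if_pos hrk, if_pos hrk]
        have hup : natX m (fun r' => Function.update bb ⟨K, by omega⟩ bK r' z) r
            = natX m (fun r' => bb r' z) r := by
          rw [natX, natX, dif_pos (by omega : r ≤ m), dif_pos (by omega : r ≤ m)]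
          have hne : (⟨r, by omega⟩ : Fin (m+1)) ≠ ⟨K, by omega⟩ :=
            Fin.ne_of_val_ne (show r ≠ K by omega)
          exact congrFun (Function.update_of_ne hne _ _) z
        rw [hup]
      · rw [if_neg hrk, if_neg hrk]
    · have hkK : (k' : ℕ) = K := by omega
      have hk'eq : k' = ⟨K, by omega⟩ := Fin.ext hkK
      rw [hk'eq, takiff_entry]
      show a z (⟨K, by omega⟩, i) = ∑ r ∈ range (m+1), (if r ≤ K then
        ρ (natX m (fun r' => Function.update bb ⟨K, by omega⟩ bK r' z) r)
          (Frow m d (fun ki => z (Sum.inr ki)) (K - r)) i else 0)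
      have hsplit2 : ∀ r ∈ range (m+1),
          (if r ≤ K then ρ (natX m (fun r' => Function.update bb ⟨K, by omega⟩ bK r' z) r)
            (Frow m d (fun ki => z (Sum.inr ki)) (K - r)) i else 0)
          = (if r < K then ρ (natX m (fun r' => bb r' z) r)
              (Frow m d (fun ki => z (Sum.inr ki)) (K - r)) i else 0)
            + (if r = K then ρ (bK z) (fun j => z (Sum.inr ((0 : Fin (m+1)), j))) i else 0) := by
        intro r _
        rcases lt_trichotomy r K with h | h | h
        · rw [if_pos (le_of_lt h), if_pos h, if_neg (by omega : ¬ r = K), add_zero]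
          have hup : natX m (fun r' => Function.update bb ⟨K, by omega⟩ bK r' z) r
              = natX m (fun r' => bb r' z) r := by
            rw [natX, natX, dif_pos (by omega : r ≤ m), dif_pos (by omega : r ≤ m)]
            exact congrFun (Function.update_of_ne (Fin.ne_of_val_ne (show r ≠ K by omega)) _ _) z
          rw [hup]
        · rw [h, if_pos le_rfl, if_neg (lt_irrefl K), if_pos rfl, zero_add, Nat.sub_self]
          have hXK : natX m (fun r' => Function.update bb ⟨K, by omega⟩ bK r' z) K = bK z := by
            rw [natX, dif_pos (by omega : K ≤ m)]
            exact congrFun (Function.update_self _ _ _) z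
          rw [hXK]
          have hFrow0 : Frow m d (fun ki => z (Sum.inr ki)) 0
              = fun j => z (Sum.inr ((0 : Fin (m+1)), j)) := by
            rw [Frow, dif_pos (Nat.zero_le m)]
            funext j
            have h0fin : (⟨0, by omega⟩ : Fin (m+1)) = 0 := Fin.ext (by simp)
            rw [h0fin]
          rw [hFrow0]
        · rw [if_neg (by omega : ¬ r ≤ K), if_neg (by omega : ¬ r < K),
            if_neg (by omega : ¬ r = K), add_zero]
      rw [Finset.sum_congr rfl hsplit2, Finset.sum_add_distrib,
        Finset.sum_ite_eq' (range (m+1)) K, if_pos (Finset.mem_range.mpr (by omega))]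
      have hcfi := congrFun (hcK z) i
      have hcfj : cf z i = a z (⟨K, by omega⟩, i) - ∑ r ∈ range (m+1),
          (if r < K then ρ (natX m (fun r' => bb r' z) r)
            (Frow m d (fun ki => z (Sum.inr ki)) (K - r)) i else 0) := rfl
      rw [← hcfi, hcfj]
      ring
end Step

end TakiffAux

open TakiffAux in
/-- If the representation `(g, ρ, V)` has the polynomial Dixmier property, then so does
the Takiff representation `(g_m, ρ_m, V_m)` for every `m ≥ 0`. -/
theorem takiff_dixmier_property {g : Type*} [LieRing g] [LieAlgebra ℝ g]
    [FiniteDimensional ℝ g] {d : ℕ}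
    (ρ : g →ₗ⁅ℝ⁆ Module.End ℝ (Fin d → ℝ))
    (hD : HasPolyDixmier fun x (v : Fin d → ℝ) => ρ x v) (m : ℕ) :
    HasPolyDixmier (g := Fin (m + 1) → g) (takiffRepAct ρ (m := m)) := by
  classical
  intro w a apoly hAnn
  have ha : ∀ ki, PF (fun z => a z ki) := fun ki =>
    (isPolynomialMap_pi_iff a).mp apoly ki
  have main : ∀ K : ℕ, K ≤ m + 1 →
      ∃ bb : Fin (m+1) → ((Fin w ⊕ (Fin (m+1) × Fin d)) → ℝ) → g,
        (∀ r, IsPolynomialMap (bb r)) ∧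
        ∀ k' : Fin (m+1), (k' : ℕ) < K → ∀ z i,
          a z (k', i) = takiffRepAct ρ (fun r => bb r z) (fun ki => z (Sum.inr ki)) (k', i) := by
    intro K
    induction K with
    | zero =>
      exact fun _ => ⟨fun _ _ => 0, fun _ => ipm_zero, fun k' hk' => absurd hk' (by omega)⟩
    | succ K ih =>
      intro hK1
      obtain ⟨bb, hbbpoly, hrows⟩ := ih (by omega)
      exact step ρ hD a ha hAnn K (by omega) bb hbbpoly hrows
  obtain ⟨bb, hbbpoly, hrows⟩ := main (m+1) le_rfl
  refine ⟨fun z r => bb r z, ?_, ?_⟩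
  · have hrw : (fun z : (Fin w ⊕ (Fin (m+1) × Fin d)) → ℝ => fun r => bb r z)
        = fun z => ∑ r : Fin (m+1), Pi.single r (bb r z) :=
      funext fun z => (Finset.univ_sum_single _).symm
    rw [hrw]
    exact ipm_sum Finset.univ (fun r z => Pi.single r (bb r z))
      (fun r _ => ipm_linComp (hbbpoly r) (LinearMap.single ℝ (fun _ : Fin (m+1) => g) r))
  · intro z
    funext ki
    obtain ⟨k', i⟩ := ki
    exact hrows k' k'.isLt z i
end
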